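/- arXiv:0902.1623 — 6 statements merged into one kernel-verified Lean document; each statement's English description precedes it below -/
import Mathlib

section
/- Let n ≥ 3 be an integer, let H = (n-1)/n and let d ∈ ℝ. Then M_{H,d}(t) := sinh^{n-1}(t) − nH·I_{n-1}(t) − d tends to +∞ as t → ∞. -/
open Filter Topology

/-- `Ifun m t = ∫₀ᵗ sinh^m(r) dr`. -/
noncomputable def Ifun (m : ℕ) (t : ℝ) : ℝ := ∫ r in (0:ℝ)..t, Real.sinh r ^ m

/-- `Mfun n H d t = sinh^{n-1}(t) − nH·I_{n-1}(t) − d`. -/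
noncomputable def Mfun (n : ℕ) (H d t : ℝ) : ℝ :=
  Real.sinh t ^ (n - 1) - n * H * Ifun (n - 1) t - d

/-- `Pfun n H d t = sinh^{n-1}(t) + nH·I_{n-1}(t) + d`. -/
noncomputable def Pfun (n : ℕ) (H d t : ℝ) : ℝ :=
  Real.sinh t ^ (n - 1) + n * H * Ifun (n - 1) t + d

/-- `Qfun n H d t = (nH·I_{n-1}(t) + d)/√(M·P)`. -/
noncomputable def Qfun (n : ℕ) (H d t : ℝ) : ℝ :=
  (n * H * Ifun (n - 1) t + d) / Real.sqrt (Mfun n H d t * Pfun n H d t)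

lemma sinh_pow_eq_integral (m : ℕ) (t : ℝ) :
    Real.sinh t ^ (m + 2) =
      ∫ r in (0:ℝ)..t, ((m + 2 : ℝ) * Real.sinh r ^ (m + 1) * Real.cosh r) := by
  have h := intervalIntegral.integral_eq_sub_of_hasDerivAt
    (f := fun x => Real.sinh x ^ (m + 2)) (a := 0) (b := t)
    (f' := fun r => (m + 2 : ℝ) * Real.sinh r ^ (m + 1) * Real.cosh r)
    (fun r _ => by simpa using (Real.hasDerivAt_sinh r).fun_pow (m + 2))
    (by apply Continuous.intervalIntegrable; continuity)
  simp at h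
  rw [h]

lemma one_le_sinh {r : ℝ} (hr : 1 ≤ r) : 1 ≤ Real.sinh r := by
  have h1 : Real.sinh 1 ≤ Real.sinh r := Real.sinh_le_sinh.mpr hr
  have h2 : (1:ℝ) ≤ Real.sinh 1 := by
    rw [Real.sinh_eq]
    have he : (2.7:ℝ) ≤ Real.exp 1 := by
      have := Real.exp_one_gt_d9; linarith
    have hi : Real.exp (-1) ≤ 0.4 := by
      rw [Real.exp_neg]
      rw [inv_le_comm₀ (Real.exp_pos 1) (by norm_num)]
      linarith
    linarith
  linarith

lemma pointwise_bound (m : ℕ) {r : ℝ} (hr : 1 ≤ r) :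
    (1/3 : ℝ) ≤ Real.sinh r ^ (m + 1) * (Real.cosh r - Real.sinh r) := by
  have hs := one_le_sinh hr
  have hce : Real.cosh r - Real.sinh r = Real.exp (-r) := Real.cosh_sub_sinh r
  have key : (1/3 : ℝ) ≤ Real.sinh r * Real.exp (-r) := by
    have : Real.sinh r * Real.exp (-r) = (1 - Real.exp (-r) ^ 2) / 2 := by
      rw [Real.sinh_eq, Real.exp_neg]
      have := (Real.exp_pos r).ne'
      field_simp
    rw [this]
    have h1 : Real.exp (-r) ≤ Real.exp (-1) := Real.exp_le_exp.mpr (by linarith)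
    have h2 : Real.exp (-1) ≤ 0.4 := by
      rw [Real.exp_neg]
      rw [inv_le_comm₀ (Real.exp_pos 1) (by norm_num)]
      have := Real.exp_one_gt_d9; linarith
    have h0 : 0 < Real.exp (-r) := Real.exp_pos _
    nlinarith
  have hpow : (1:ℝ) ≤ Real.sinh r ^ m := one_le_pow₀ hs
  calc (1/3 : ℝ) ≤ Real.sinh r * Real.exp (-r) := key
    _ ≤ Real.sinh r ^ m * (Real.sinh r * Real.exp (-r)) := by
        nlinarith [Real.exp_pos (-r)]
    _ = Real.sinh r ^ (m + 1) * (Real.cosh r - Real.sinh r) := by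
        rw [hce, pow_succ]; ring


/-- For `n ≥ 3`, `H = (n-1)/n` and `d ∈ ℝ`, `M_{H,d}(t) → +∞` as `t → ∞`. -/
theorem stmt3 (n : ℕ) (hn : 3 ≤ n) (H d : ℝ) (hH : H = ((n : ℝ) - 1) / n) :
    Tendsto (Mfun n H d) atTop atTop := by
  obtain ⟨m, rfl⟩ : ∃ m, n = m + 3 := ⟨n - 3, by omega⟩
  have hnH : ((m + 3 : ℕ) : ℝ) * H = (m + 2 : ℝ) := by
    rw [hH]; push_cast; field_simp; ring
  -- the auxiliary integral
  set f : ℝ → ℝ := fun r => Real.sinh r ^ (m + 1) * (Real.cosh r - Real.sinh r) with hf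
  have hfc : Continuous f := by continuity
  set g : ℝ → ℝ := fun t => ∫ r in (0:ℝ)..t, f r with hg
  have hM : ∀ t, Mfun (m + 3) H d t = (m + 2 : ℝ) * g t - d := by
    intro t
    have e1 : (m + 3) - 1 = m + 2 := by omega
    have hint1 : IntervalIntegrable (fun r => (m + 2 : ℝ) * Real.sinh r ^ (m + 1) * Real.cosh r)
        MeasureTheory.volume 0 t := by apply Continuous.intervalIntegrable; continuity
    have hint2 : IntervalIntegrable (fun r => (m + 2 : ℝ) * Real.sinh r ^ (m + 2))
        MeasureTheory.volume 0 t := by apply Continuous.intervalIntegrable; continuity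
    rw [Mfun, e1, hnH, sinh_pow_eq_integral, Ifun]
    rw [show ((m + 2 : ℝ)) * ∫ r in (0:ℝ)..t, Real.sinh r ^ (m + 2)
        = ∫ r in (0:ℝ)..t, (m + 2 : ℝ) * Real.sinh r ^ (m + 2) from
      (intervalIntegral.integral_const_mul _ _).symm]
    rw [← intervalIntegral.integral_sub hint1 hint2]
    rw [hg]
    rw [show ((m + 2 : ℝ)) * ∫ r in (0:ℝ)..t, f r = ∫ r in (0:ℝ)..t, (m + 2 : ℝ) * f r from
      (intervalIntegral.integral_const_mul _ _).symm]
    congr 1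
    apply intervalIntegral.integral_congr
    intro r _
    simp only [hf]
    rw [pow_succ (Real.sinh r) (m+1)]
    ring
  -- lower bound for g
  have hglb : ∀ t, 1 ≤ t → g 1 + (t - 1) / 3 ≤ g t := by
    intro t ht
    have hadd : g 1 + ∫ r in (1:ℝ)..t, f r = g t := by
      rw [hg]
      exact intervalIntegral.integral_add_adjacent_intervals
        (hfc.intervalIntegrable 0 1) (hfc.intervalIntegrable 1 t)
    have hmono : (t - 1) / 3 ≤ ∫ r in (1:ℝ)..t, f r := by
      have := intervalIntegral.integral_mono_on ht
        (intervalIntegrable_const (c := (1/3 : ℝ)) (μ := MeasureTheory.volume)) (hfc.intervalIntegrable 1 t)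
        (fun r hr => pointwise_bound m hr.1)
      simpa [div_eq_mul_inv] using this
    linarith
  -- final
  have hL : Tendsto (fun t : ℝ => (m + 2 : ℝ) * (g 1 + (t - 1) / 3) - d) atTop atTop := by
    apply tendsto_atTop_add_const_right
    apply Tendsto.const_mul_atTop (by positivity : (0:ℝ) < (m + 2 : ℝ))
    apply tendsto_atTop_add_const_left
    exact (tendsto_atTop_add_const_right _ _ tendsto_id).atTop_div_const (by norm_num)
  apply tendsto_atTop_mono' atTop _ hL
  filter_upwards [eventually_ge_atTop (1:ℝ)] with t ht
  rw [hM t]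
  have := hglb t ht
  nlinarith
end

section
/- Let n ≥ 2 be an integer, let d > 0, and assume either (i) n ≥ 3 and 0 < H ≤ (n-1)/n, or (ii) n = 2 and 0 < H < 1/2, or (iii) n = 2, H = 1/2 and 0 < d < 1. Then there exists a unique a > 0 with M_{H,d}(a) = 0; moreover M_{H,d}(t) < 0 for 0 ≤ t < a and M_{H,d}(t) > 0 for t > a. -/
open Filter Topology

lemma hasDerivAt_Ifun (m : ℕ) (t : ℝ) : HasDerivAt (Ifun m) (Real.sinh t ^ m) t := by
  have hc : Continuous fun r : ℝ => Real.sinh r ^ m := Real.continuous_sinh.pow m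
  exact intervalIntegral.integral_hasDerivAt_right (hc.intervalIntegrable 0 t)
    (hc.stronglyMeasurableAtFilter _ _) hc.continuousAt

noncomputable def Dfun (n : ℕ) (H t : ℝ) : ℝ :=
  ((n : ℝ) - 1) * Real.sinh t ^ (n - 2) * Real.cosh t - n * H * Real.sinh t ^ (n - 1)

lemma hasDerivAt_Mfun (n : ℕ) (hn : 2 ≤ n) (H d t : ℝ) :
    HasDerivAt (Mfun n H d) (Dfun n H t) t := by
  have h1 := (Real.hasDerivAt_sinh t).pow (n - 1)
  have h2 := (hasDerivAt_Ifun (n - 1) t).const_mul ((n : ℝ) * H)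
  have h := (h1.sub h2).sub_const d
  have hE : (↑(n-1) * Real.sinh t ^ (n - 1 - 1) * Real.cosh t - ↑n * H * Real.sinh t ^ (n-1))
      = Dfun n H t := by
    have : n - 1 - 1 = n - 2 := by omega
    rw [this, Dfun]
    have : ((n - 1 : ℕ) : ℝ) = (n : ℝ) - 1 := by
      push_cast [Nat.cast_sub (by omega : 1 ≤ n)]; ring
    rw [this]
  rw [← hE]
  exact h

lemma continuous_Mfun (n : ℕ) (hn : 2 ≤ n) (H d : ℝ) : Continuous (Mfun n H d) :=
  continuous_iff_continuousAt.2 fun t => (hasDerivAt_Mfun n hn H d t).differentiableAt.continuousAt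

lemma Dfun_pos (n : ℕ) (hn : 2 ≤ n) (H : ℝ) (hH : (n : ℝ) * H ≤ (n : ℝ) - 1)
    {t : ℝ} (ht : 0 < t) : 0 < Dfun n H t := by
  have hs : 0 < Real.sinh t := Real.sinh_pos_iff.2 ht
  have hcs : Real.sinh t < Real.cosh t := by
    have := Real.cosh_sub_sinh t
    nlinarith [Real.exp_pos (-t)]
  have hp : 0 < Real.sinh t ^ (n - 2) := pow_pos hs _
  have hpow : Real.sinh t ^ (n - 1) = Real.sinh t ^ (n - 2) * Real.sinh t := by
    rw [← pow_succ]; congr 1; omega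
  have hn1 : (1 : ℝ) ≤ (n : ℝ) - 1 := by
    have : (2 : ℝ) ≤ (n : ℝ) := by exact_mod_cast hn
    linarith
  rw [Dfun, hpow]
  nlinarith [mul_pos hp (sub_pos.2 hcs), mul_le_mul_of_nonneg_right hH (mul_pos hp hs).le]

lemma Mfun_zero (n : ℕ) (hn : 2 ≤ n) (H d : ℝ) : Mfun n H d 0 = -d := by
  have h1 : n - 1 ≠ 0 := by omega
  simp [Mfun, Ifun, Real.sinh_zero, zero_pow h1]

lemma strictMonoOn_Mfun (n : ℕ) (hn : 2 ≤ n) (H d : ℝ) (hH : (n : ℝ) * H ≤ (n : ℝ) - 1) :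
    StrictMonoOn (Mfun n H d) (Set.Ici 0) := by
  apply strictMonoOn_of_deriv_pos (convex_Ici 0) (continuous_Mfun n hn H d).continuousOn
  intro x hx
  rw [interior_Ici, Set.mem_Ioi] at hx
  rw [(hasDerivAt_Mfun n hn H d x).deriv]
  exact Dfun_pos n hn H hH hx

lemma Dfun_lb (n : ℕ) (hn : 3 ≤ n) (H : ℝ) (hH : (n : ℝ) * H ≤ (n : ℝ) - 1)
    {r : ℝ} (hr : 1 ≤ r) : ((n : ℝ) - 1) / 4 ^ (n - 2) ≤ Dfun n H r := by
  set s := Real.sinh r with hs_def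
  set c := Real.cosh r with hc_def
  have hr0 : (0:ℝ) < r := lt_of_lt_of_le one_pos hr
  have hs : 0 < s := Real.sinh_pos_iff.2 hr0
  have hn1 : (2 : ℝ) ≤ (n : ℝ) - 1 := by
    have : (3 : ℝ) ≤ (n : ℝ) := by exact_mod_cast hn
    linarith
  have hpow : s ^ (n - 1) = s ^ (n - 2) * s := by
    rw [← pow_succ]; congr 1; omega
  have hcs : c - s = Real.exp (-r) := Real.cosh_sub_sinh r
  -- step 1 : Dfun ≥ (n-1) * s^(n-2) * (c - s)
  have key : (n:ℝ) * H * (s ^ (n-2) * s) ≤ ((n:ℝ) - 1) * (s ^ (n-2) * s) :=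
    mul_le_mul_of_nonneg_right hH (by positivity)
  have h1 : ((n:ℝ) - 1) * (s ^ (n-2) * (c - s)) ≤ Dfun n H r := by
    rw [Dfun, hpow, ← hs_def, ← hc_def]; nlinarith [key]
  -- step 2 : exp r / 4 ≤ s
  have hexp2 : (2:ℝ) ≤ Real.exp r := by
    have := Real.add_one_le_exp r; linarith
  have hexpneg : Real.exp (-r) ≤ 1 := Real.exp_le_one_iff.2 (by linarith)
  have h2 : Real.exp r / 4 ≤ s := by
    rw [hs_def, Real.sinh_eq]; nlinarith
  -- step 3 : exp((n-2) r) / 4^(n-2) ≤ s^(n-2)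
  have h3 : Real.exp r ^ (n-2) / 4 ^ (n-2) ≤ s ^ (n-2) := by
    have := pow_le_pow_left₀ (by positivity : (0:ℝ) ≤ Real.exp r / 4) h2 (n-2)
    calc Real.exp r ^ (n-2) / 4 ^ (n-2) = (Real.exp r / 4) ^ (n-2) := by
          rw [div_pow]
      _ ≤ s ^ (n-2) := this
  -- step 4 : 1/4^(n-2) ≤ s^(n-2) * exp (-r)
  have hk1 : (1:ℝ) ≤ ((n - 2 : ℕ) : ℝ) := by exact_mod_cast (by omega : 1 ≤ n - 2)
  have h4 : (1:ℝ) / 4 ^ (n-2) ≤ s ^ (n-2) * Real.exp (-r) := by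
    have step : Real.exp r ^ (n-2) / 4 ^ (n-2) * Real.exp (-r) ≤ s ^ (n-2) * Real.exp (-r) :=
      mul_le_mul_of_nonneg_right h3 (Real.exp_pos _).le
    have heq : Real.exp r ^ (n-2) * Real.exp (-r) = Real.exp (((n-2:ℕ):ℝ) * r + -r) := by
      rw [← Real.exp_nat_mul, ← Real.exp_add]
    have hone : (1:ℝ) ≤ Real.exp r ^ (n-2) * Real.exp (-r) := by
      rw [heq]
      apply Real.one_le_exp
      nlinarith
    calc (1:ℝ) / 4 ^ (n-2) ≤ Real.exp r ^ (n-2) * Real.exp (-r) / 4 ^ (n-2) := by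
          gcongr
      _ = Real.exp r ^ (n-2) / 4 ^ (n-2) * Real.exp (-r) := by ring
      _ ≤ s ^ (n-2) * Real.exp (-r) := step
  calc ((n:ℝ) - 1) / 4 ^ (n-2) = ((n:ℝ) - 1) * (1 / 4 ^ (n-2)) := by ring
    _ ≤ ((n:ℝ) - 1) * (s ^ (n-2) * Real.exp (-r)) :=
        mul_le_mul_of_nonneg_left h4 (by linarith)
    _ = ((n:ℝ) - 1) * (s ^ (n-2) * (c - s)) := by rw [hcs]
    _ ≤ Dfun n H r := h1

lemma Ifun_one (t : ℝ) : Ifun 1 t = Real.cosh t - 1 := by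
  rw [Ifun]
  have h : ∀ x ∈ Set.uIcc (0:ℝ) t, HasDerivAt Real.cosh (Real.sinh x ^ 1) x := fun x _ => by
    simpa using Real.hasDerivAt_cosh x
  rw [intervalIntegral.integral_eq_sub_of_hasDerivAt h
    ((Real.continuous_sinh.pow 1).intervalIntegrable 0 t), Real.cosh_zero]

lemma Mfun_two (H d t : ℝ) : Mfun 2 H d t = Real.sinh t - 2 * H * (Real.cosh t - 1) - d := by
  simp [Mfun, Ifun_one]

lemma continuous_Dfun (n : ℕ) (H : ℝ) : Continuous (Dfun n H) := by
  unfold Dfun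
  fun_prop

lemma exists_pos_val (n : ℕ) (hn : 2 ≤ n) (H d : ℝ) (hd : 0 < d)
    (hH : (n : ℝ) * H ≤ (n : ℝ) - 1)
    (hcase : (3 ≤ n ∧ 0 < H ∧ H ≤ ((n : ℝ) - 1) / n) ∨
             (n = 2 ∧ 0 < H ∧ H < 1 / 2) ∨
             (n = 2 ∧ H = 1 / 2 ∧ 0 < d ∧ d < 1)) :
    ∃ T, 0 < T ∧ 0 < Mfun n H d T := by
  rcases hcase with ⟨hn3, hH0, _⟩ | ⟨hn2, hH0, hH2⟩ | ⟨hn2, hH2, hd0, hd1⟩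
  · -- n ≥ 3
    set c : ℝ := ((n:ℝ) - 1) / 4 ^ (n - 2) with hc
    have hn1 : (0:ℝ) < (n:ℝ) - 1 := by
      have : (3:ℝ) ≤ (n:ℝ) := by exact_mod_cast hn3
      linarith
    have hcpos : 0 < c := by positivity
    set T : ℝ := 1 + (d + 1) / c with hT
    have hT1 : 1 ≤ T := by
      have h : 0 < (d + 1) / c := by positivity
      rw [hT]; linarith
    refine ⟨T, by linarith, ?_⟩
    have hftc : ∫ r in (1:ℝ)..T, Dfun n H r = Mfun n H d T - Mfun n H d 1 :=
      intervalIntegral.integral_eq_sub_of_hasDerivAt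
        (fun x _ => hasDerivAt_Mfun n hn H d x)
        ((continuous_Dfun n H).intervalIntegrable 1 T)
    have hlow : (T - 1) * c ≤ ∫ r in (1:ℝ)..T, Dfun n H r := by
      have := intervalIntegral.integral_mono_on hT1
        (intervalIntegrable_const (μ := MeasureTheory.volume) (c := c))
        ((continuous_Dfun n H).intervalIntegrable 1 T)
        (fun x hx => Dfun_lb n hn3 H hH hx.1)
      rw [intervalIntegral.integral_const, smul_eq_mul] at this
      linarith
    have hTc : (T - 1) * c = d + 1 := by
      rw [hT]; field_simp; ring
    have hM1 : -d < Mfun n H d 1 := by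
      have := strictMonoOn_Mfun n hn H d hH (Set.self_mem_Ici) (by norm_num : (1:ℝ) ∈ Set.Ici 0)
        one_pos
      rwa [Mfun_zero n hn H d] at this
    linarith
  · -- n = 2, H < 1/2
    subst hn2
    set T : ℝ := Real.arsinh (d / (1 - 2 * H) + 1) with hT
    have h2H : 0 < 1 - 2 * H := by linarith
    have hspos : 0 < d / (1 - 2 * H) + 1 := by positivity
    have hsT : Real.sinh T = d / (1 - 2 * H) + 1 := Real.sinh_arsinh _
    have hTpos : 0 < T := by
      rw [hT, Real.arsinh_pos_iff]; exact hspos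
    refine ⟨T, hTpos, ?_⟩
    rw [Mfun_two]
    have hcs : Real.cosh T - Real.sinh T = Real.exp (-T) := Real.cosh_sub_sinh T
    have hle : Real.cosh T ≤ Real.sinh T + 1 := by
      have : Real.exp (-T) ≤ 1 := Real.exp_le_one_iff.2 (by linarith)
      linarith
    have : d = (d / (1 - 2 * H)) * (1 - 2 * H) := by field_simp
    nlinarith [hsT, hle]
  · -- n = 2, H = 1/2, d < 1
    subst hn2; subst hH2
    set T : ℝ := Real.log (2 / (1 - d)) with hT
    have h1d : 0 < 1 - d := by linarith
    have hgt1 : 1 < 2 / (1 - d) := by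
      rw [lt_div_iff₀ h1d]; linarith
    have hTpos : 0 < T := Real.log_pos hgt1
    refine ⟨T, hTpos, ?_⟩
    rw [Mfun_two]
    have hcs : Real.cosh T - Real.sinh T = Real.exp (-T) := Real.cosh_sub_sinh T
    have hexp : Real.exp (-T) = (1 - d) / 2 := by
      rw [hT, Real.exp_neg, Real.exp_log (by positivity)]
      field_simp
    nlinarith [hcs, hexp]


/-- Let `n ≥ 2`, `d > 0`, and assume (i) `n ≥ 3` and `0 < H ≤ (n-1)/n`, or (ii) `n = 2`
and `0 < H < 1/2`, or (iii) `n = 2`, `H = 1/2` and `0 < d < 1`. Then there is a unique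
`a > 0` with `M_{H,d}(a) = 0`; moreover `M_{H,d} < 0` on `[0,a)` and `M_{H,d} > 0` on
`(a,∞)`. -/
theorem stmt5 (n : ℕ) (hn : 2 ≤ n) (H d : ℝ) (hd : 0 < d)
    (hcase : (3 ≤ n ∧ 0 < H ∧ H ≤ ((n : ℝ) - 1) / n) ∨
             (n = 2 ∧ 0 < H ∧ H < 1 / 2) ∨
             (n = 2 ∧ H = 1 / 2 ∧ 0 < d ∧ d < 1)) :
    ∃ a : ℝ, 0 < a ∧ Mfun n H d a = 0 ∧
      (∀ t, 0 ≤ t → t < a → Mfun n H d t < 0) ∧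
      (∀ t, a < t → 0 < Mfun n H d t) ∧
      (∀ a', 0 < a' → Mfun n H d a' = 0 → a' = a) := by
  have hnpos : (0:ℝ) < (n:ℝ) := by positivity
  have hH : (n : ℝ) * H ≤ (n : ℝ) - 1 := by
    rcases hcase with ⟨hn3, hH0, hHle⟩ | ⟨hn2, hH0, hH2⟩ | ⟨hn2, hH2, _⟩
    · calc (n:ℝ) * H ≤ (n:ℝ) * (((n:ℝ) - 1) / n) := by
            exact mul_le_mul_of_nonneg_left hHle hnpos.le
        _ = (n:ℝ) - 1 := by field_simp
    · subst hn2; push_cast; linarith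
    · subst hn2; subst hH2; push_cast; norm_num
  have hmono := strictMonoOn_Mfun n hn H d hH
  obtain ⟨T, hTpos, hMT⟩ := exists_pos_val n hn H d hd hH hcase
  have hM0 : Mfun n H d 0 = -d := Mfun_zero n hn H d
  have hIVT := intermediate_value_Ioo hTpos.le (continuous_Mfun n hn H d).continuousOn
  have h0mem : (0:ℝ) ∈ Set.Ioo (Mfun n H d 0) (Mfun n H d T) := by
    rw [hM0]; exact ⟨by linarith, hMT⟩
  obtain ⟨a, ⟨ha0, haT⟩, hMa⟩ := hIVT h0mem
  refine ⟨a, ha0, hMa, ?_, ?_, ?_⟩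
  · intro t ht0 hta
    have := hmono (Set.mem_Ici.2 ht0) (Set.mem_Ici.2 ha0.le) hta
    rwa [hMa] at this
  · intro t hat
    have := hmono (Set.mem_Ici.2 ha0.le) (Set.mem_Ici.2 (ha0.trans hat).le) hat
    rwa [hMa] at this
  · intro a' ha' hMa'
    exact hmono.injOn (Set.mem_Ici.2 ha'.le) (Set.mem_Ici.2 ha0.le) (hMa'.trans hMa.symm)
end

section
/- Let n ≥ 2 be an integer, let 0 < H < (n-1)/n and let d ∈ ℝ. Choose ρ₀ > 0 such that M_{H,d} > 0 and P_{H,d} > 0 on [ρ₀, ∞), and define λ(ρ) := ∫_{ρ₀}^{ρ} Q_{H,d}(t) dt for ρ ≥ ρ₀. Then lim_{ρ→∞} λ(ρ)/ρ = (nH/(n-1)) / √(1 − (nH/(n-1))²). -/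
open Filter Topology
open MeasureTheory

/-- Continuous Cesàro: if `f → c` at `+∞` and `f` is integrable on `[a, x]` for `x ≥ a`,
then `(∫_a^ρ f)/ρ → c`. -/
lemma cesaro_aux {f : ℝ → ℝ} {a c : ℝ}
    (hint : ∀ x, a ≤ x → IntervalIntegrable f volume a x)
    (hf : Tendsto f atTop (𝓝 c)) :
    Tendsto (fun ρ => (∫ t in a..ρ, f t) / ρ) atTop (𝓝 c) := by
  rw [Metric.tendsto_atTop]
  intro ε hε
  obtain ⟨T₀, hT₀⟩ := Metric.tendsto_atTop.1 hf (ε / 3) (by positivity)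
  set T : ℝ := max T₀ (max a 0) with hTdef
  have haT : a ≤ T := le_trans (le_max_left a 0) (le_max_right _ _)
  have hT0 : (0:ℝ) ≤ T := le_trans (le_max_right a 0) (le_max_right _ _)
  set C : ℝ := |(∫ t in a..T, f t) - T * c| with hCdef
  have hC0 : 0 ≤ C := abs_nonneg _
  refine ⟨max (max T 1) (3 * C / ε + 1), fun ρ hρ => ?_⟩
  have hρT : T ≤ ρ := le_trans (le_max_left T 1) (le_trans (le_max_left _ _) hρ)
  have hρ1 : (1:ℝ) ≤ ρ := le_trans (le_max_right T 1) (le_trans (le_max_left _ _) hρ)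
  have hρpos : (0:ℝ) < ρ := lt_of_lt_of_le one_pos hρ1
  have hρC : 3 * C / ε ≤ ρ := le_trans (by linarith) (le_trans (le_max_right _ _) hρ)
  have haρ : a ≤ ρ := le_trans haT hρT
  have hIT : IntervalIntegrable f volume a T := hint T haT
  have hIρ : IntervalIntegrable f volume a ρ := hint ρ haρ
  have hITρ : IntervalIntegrable f volume T ρ := hIT.symm.trans hIρ
  have split : (∫ t in a..ρ, f t) = (∫ t in a..T, f t) + ∫ t in T..ρ, f t :=
    (intervalIntegral.integral_add_adjacent_intervals hIT hITρ).symm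
  have h2 : (∫ t in T..ρ, (f t - c)) = (∫ t in T..ρ, f t) - (ρ - T) * c := by
    rw [intervalIntegral.integral_sub hITρ intervalIntegrable_const,
      intervalIntegral.integral_const]
    simp [smul_eq_mul]
  have hb : |∫ t in T..ρ, (f t - c)| ≤ ε / 3 * |ρ - T| := by
    have hb0 := intervalIntegral.norm_integral_le_of_norm_le_const
      (C := ε / 3) (f := fun t => f t - c) (a := T) (b := ρ) ?_
    · rwa [Real.norm_eq_abs] at hb0
    · intro x hx
      rw [Set.uIoc_of_le hρT] at hx
      have hx1 : T₀ ≤ x := le_trans (le_max_left _ _) hx.1.le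
      have := hT₀ x hx1
      rw [Real.dist_eq] at this
      simpa [Real.norm_eq_abs] using this.le
  have key : (∫ t in a..ρ, f t) / ρ - c
      = ((∫ t in a..T, f t) - T * c) / ρ + (∫ t in T..ρ, (f t - c)) / ρ := by
    rw [h2, split]
    field_simp
    ring
  rw [Real.dist_eq, key]
  have e1 : |((∫ t in a..T, f t) - T * c) / ρ| ≤ C / ρ := by
    rw [abs_div, abs_of_pos hρpos]
  have e2 : |(∫ t in T..ρ, (f t - c)) / ρ| ≤ ε / 3 := by
    rw [abs_div, abs_of_pos hρpos]
    rw [div_le_iff₀ hρpos]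
    calc |∫ t in T..ρ, (f t - c)| ≤ ε / 3 * |ρ - T| := hb
      _ = ε / 3 * (ρ - T) := by rw [abs_of_nonneg (by linarith)]
      _ ≤ ε / 3 * ρ := by nlinarith
  have e3 : C / ρ ≤ ε / 3 := by
    rw [div_le_iff₀ hρpos]
    rw [div_le_iff₀ hε] at hρC
    nlinarith
  calc |((∫ t in a..T, f t) - T * c) / ρ + (∫ t in T..ρ, (f t - c)) / ρ|
      ≤ |((∫ t in a..T, f t) - T * c) / ρ| + |(∫ t in T..ρ, (f t - c)) / ρ| := abs_add_le _ _
    _ ≤ ε / 3 + ε / 3 := add_le_add (e1.trans e3) e2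
    _ < ε := by linarith

lemma sinh_lower {t : ℝ} (ht : 2 ≤ t) : Real.exp t / 4 ≤ Real.sinh t := by
  rw [Real.sinh_eq]
  have h1 : Real.exp (-t) ≤ 1 := Real.exp_le_one_iff.2 (by linarith)
  have h2 : (4:ℝ) ≤ Real.exp t := by
    have := Real.add_one_le_exp (1:ℝ)
    calc (4:ℝ) ≤ Real.exp 1 * Real.exp 1 := by nlinarith
      _ = Real.exp 2 := by rw [← Real.exp_add]; norm_num
      _ ≤ Real.exp t := Real.exp_le_exp.2 ht
  linarith

lemma one_le_sinh_s8 {t : ℝ} (ht : 2 ≤ t) : 1 ≤ Real.sinh t := by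
  have h2 : (4:ℝ) ≤ Real.exp t := by
    have := Real.add_one_le_exp (1:ℝ)
    calc (4:ℝ) ≤ Real.exp 1 * Real.exp 1 := by nlinarith
      _ = Real.exp 2 := by rw [← Real.exp_add]; norm_num
      _ ≤ Real.exp t := Real.exp_le_exp.2 ht
  have := sinh_lower ht
  linarith

lemma key_ineq (m : ℕ) (hm : 1 ≤ m) {t : ℝ} (ht : 0 ≤ t) :
    |Real.sinh t ^ m - m * Ifun m t| ≤ m * Real.sinh t ^ (m - 1) * t := by
  have hcont1 : Continuous fun r : ℝ => (m : ℝ) * Real.sinh r ^ (m - 1) * Real.cosh r :=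
    (continuous_const.mul (Real.continuous_sinh.pow _)).mul Real.continuous_cosh
  have hcont2 : Continuous fun r : ℝ => (m : ℝ) * Real.sinh r ^ m :=
    continuous_const.mul (Real.continuous_sinh.pow _)
  have hS : Real.sinh t ^ m
      = ∫ r in (0:ℝ)..t, (m : ℝ) * Real.sinh r ^ (m - 1) * Real.cosh r := by
    have := intervalIntegral.integral_eq_sub_of_hasDerivAt
      (f := fun x => Real.sinh x ^ m)
      (f' := fun r => (m : ℝ) * Real.sinh r ^ (m - 1) * Real.cosh r)
      (fun r _ => (Real.hasDerivAt_sinh r).pow m)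
      (hcont1.intervalIntegrable 0 t)
    rw [this]
    simp [zero_pow (by omega : m ≠ 0)]
  have hI : (m : ℝ) * Ifun m t = ∫ r in (0:ℝ)..t, (m : ℝ) * Real.sinh r ^ m := by
    rw [Ifun, ← intervalIntegral.integral_const_mul]
  have hsub : Real.sinh t ^ m - (m : ℝ) * Ifun m t
      = ∫ r in (0:ℝ)..t,
          ((m : ℝ) * Real.sinh r ^ (m - 1) * Real.cosh r - (m : ℝ) * Real.sinh r ^ m) := by
    rw [hS, hI, intervalIntegral.integral_sub (hcont1.intervalIntegrable 0 t)
      (hcont2.intervalIntegrable 0 t)]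
  rw [hsub]
  have := intervalIntegral.norm_integral_le_of_norm_le_const
    (C := (m : ℝ) * Real.sinh t ^ (m - 1))
    (f := fun r => (m : ℝ) * Real.sinh r ^ (m - 1) * Real.cosh r - (m : ℝ) * Real.sinh r ^ m)
    (a := 0) (b := t) ?_
  · rw [Real.norm_eq_abs] at this
    calc |∫ r in (0:ℝ)..t,
          ((m : ℝ) * Real.sinh r ^ (m - 1) * Real.cosh r - (m : ℝ) * Real.sinh r ^ m)|
        ≤ (m : ℝ) * Real.sinh t ^ (m - 1) * |t - 0| := this
      _ = (m : ℝ) * Real.sinh t ^ (m - 1) * t := by rw [sub_zero, abs_of_nonneg ht]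
  · intro x hx
    rw [Set.uIoc_of_le ht] at hx
    obtain ⟨hx0, hxt⟩ := hx
    have hsx : 0 ≤ Real.sinh x := Real.sinh_nonneg_iff.2 hx0.le
    have hsxt : Real.sinh x ≤ Real.sinh t := Real.sinh_le_sinh.2 hxt
    have hpow : Real.sinh x ^ m = Real.sinh x ^ (m - 1) * Real.sinh x := by
      rw [← pow_succ]
      congr 1
      omega
    have hval : (m : ℝ) * Real.sinh x ^ (m - 1) * Real.cosh x - (m : ℝ) * Real.sinh x ^ m
        = (m : ℝ) * Real.sinh x ^ (m - 1) * Real.exp (-x) := by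
      rw [hpow, ← Real.cosh_sub_sinh]
      ring
    show ‖(m:ℝ) * Real.sinh x ^ (m - 1) * Real.cosh x - (m:ℝ) * Real.sinh x ^ m‖ ≤ _
    rw [Real.norm_eq_abs, hval, abs_of_nonneg (by positivity)]
    have h1 : Real.exp (-x) ≤ 1 := Real.exp_le_one_iff.2 (by linarith)
    have h2 : Real.sinh x ^ (m - 1) ≤ Real.sinh t ^ (m - 1) := pow_le_pow_left₀ hsx hsxt _
    calc (m : ℝ) * Real.sinh x ^ (m - 1) * Real.exp (-x)
        ≤ (m : ℝ) * Real.sinh x ^ (m - 1) * 1 := by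
          apply mul_le_mul_of_nonneg_left h1 (by positivity)
      _ = (m : ℝ) * Real.sinh x ^ (m - 1) := by ring
      _ ≤ (m : ℝ) * Real.sinh t ^ (m - 1) := by
          apply mul_le_mul_of_nonneg_left h2 (by positivity)

lemma ratio_tendsto (m : ℕ) (hm : 1 ≤ m) :
    Tendsto (fun t => Ifun m t / Real.sinh t ^ m) atTop (𝓝 (1 / (m : ℝ))) := by
  rw [← tendsto_sub_nhds_zero_iff]
  apply squeeze_zero_norm' (a := fun t : ℝ => 4 * (t ^ 1 * Real.exp (-t)))
  · filter_upwards [eventually_ge_atTop (2:ℝ)] with t ht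
    have hs1 : 1 ≤ Real.sinh t := one_le_sinh_s8 ht
    have hspos : 0 < Real.sinh t := by linarith
    have hSpos : 0 < Real.sinh t ^ m := pow_pos hspos m
    have hmpos : (0:ℝ) < (m:ℝ) := by exact_mod_cast hm
    have key := key_ineq m hm (by linarith : (0:ℝ) ≤ t)
    have hrw : Ifun m t / Real.sinh t ^ m - 1 / (m:ℝ)
        = ((m:ℝ) * Ifun m t - Real.sinh t ^ m) / ((m:ℝ) * Real.sinh t ^ m) := by
      field_simp
    rw [Real.norm_eq_abs, hrw, abs_div, abs_of_pos (mul_pos hmpos hSpos)]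
    have habs : |(m:ℝ) * Ifun m t - Real.sinh t ^ m| ≤ (m:ℝ) * Real.sinh t ^ (m-1) * t := by
      rw [abs_sub_comm]; exact key
    have hpow : Real.sinh t ^ m = Real.sinh t ^ (m - 1) * Real.sinh t := by
      rw [← pow_succ]; congr 1; omega
    have hstep : ((m:ℝ) * Real.sinh t ^ (m-1) * t) / ((m:ℝ) * Real.sinh t ^ m)
        = t / Real.sinh t := by
      rw [hpow]
      field_simp
    have h4 : t / Real.sinh t ≤ 4 * (t ^ 1 * Real.exp (-t)) := by
      have hlb := sinh_lower ht
      have hexp : 0 < Real.exp t := Real.exp_pos t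
      rw [div_le_iff₀ hspos]
      have : 4 * (t ^ 1 * Real.exp (-t)) * (Real.exp t / 4) ≤
          4 * (t ^ 1 * Real.exp (-t)) * Real.sinh t := by
        apply mul_le_mul_of_nonneg_left hlb
        positivity
      calc t = 4 * (t ^ 1 * Real.exp (-t)) * (Real.exp t / 4) := by
              rw [pow_one, Real.exp_neg]
              field_simp
        _ ≤ 4 * (t ^ 1 * Real.exp (-t)) * Real.sinh t := this
    calc |(m:ℝ) * Ifun m t - Real.sinh t ^ m| / ((m:ℝ) * Real.sinh t ^ m)
        ≤ ((m:ℝ) * Real.sinh t ^ (m-1) * t) / ((m:ℝ) * Real.sinh t ^ m) := by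
          apply div_le_div_of_nonneg_right habs (by positivity) |>.trans_eq rfl
      _ = t / Real.sinh t := hstep
      _ ≤ 4 * (t ^ 1 * Real.exp (-t)) := h4
  · simpa using (Real.tendsto_pow_mul_exp_neg_atTop_nhds_zero 1).const_mul 4

lemma inv_pow_sinh_tendsto (m : ℕ) (hm : 1 ≤ m) :
    Tendsto (fun t => (Real.sinh t ^ m)⁻¹) atTop (𝓝 0) := by
  apply squeeze_zero_norm' (a := fun t : ℝ => 4 * Real.exp (-t))
  · filter_upwards [eventually_ge_atTop (2:ℝ)] with t ht
    have hs1 : 1 ≤ Real.sinh t := one_le_sinh_s8 ht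
    have hspos : 0 < Real.sinh t := by linarith
    have hS : Real.sinh t ≤ Real.sinh t ^ m := le_self_pow₀ hs1 (by omega)
    have hSpos : 0 < Real.sinh t ^ m := pow_pos hspos m
    rw [Real.norm_eq_abs, abs_of_pos (by positivity)]
    have h1 : (Real.sinh t ^ m)⁻¹ ≤ (Real.sinh t)⁻¹ :=
      inv_anti₀ hspos hS
    have h2 : (Real.sinh t)⁻¹ ≤ 4 * Real.exp (-t) := by
      have hlb := sinh_lower ht
      have hexp : 0 < Real.exp t := Real.exp_pos t
      rw [inv_le_iff_one_le_mul₀ hspos, Real.exp_neg]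
      calc (1:ℝ) = 4 * (Real.exp t)⁻¹ * (Real.exp t / 4) := by field_simp
        _ ≤ 4 * (Real.exp t)⁻¹ * Real.sinh t := by
            apply mul_le_mul_of_nonneg_left hlb (by positivity)
    exact h1.trans h2
  · simpa using (Real.tendsto_exp_atBot.comp tendsto_neg_atTop_atBot).const_mul (4:ℝ)

/-- Let `n ≥ 2`, `0 < H < (n-1)/n`, `d ∈ ℝ`. Let `ρ₀ > 0` be such that `M_{H,d} > 0` and
`P_{H,d} > 0` on `[ρ₀, ∞)`, and set `λ(ρ) := ∫_{ρ₀}^{ρ} Q_{H,d}(t) dt`. Then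
`lim_{ρ→∞} λ(ρ)/ρ = (nH/(n-1)) / √(1 − (nH/(n-1))²)`. -/
theorem stmt8 (n : ℕ) (hn : 2 ≤ n) (H d : ℝ) (hH0 : 0 < H) (hH1 : H < ((n : ℝ) - 1) / n)
    (ρ₀ : ℝ) (hρ₀ : 0 < ρ₀)
    (hMP : ∀ t, ρ₀ ≤ t → 0 < Mfun n H d t ∧ 0 < Pfun n H d t) :
    Tendsto (fun ρ : ℝ => (∫ t in ρ₀..ρ, Qfun n H d t) / ρ) atTop
      (𝓝 ((n * H / ((n : ℝ) - 1)) / Real.sqrt (1 - (n * H / ((n : ℝ) - 1)) ^ 2))) := by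
  set m : ℕ := n - 1 with hmdef
  have hm : 1 ≤ m := by omega
  have hmcast : (m : ℝ) = (n : ℝ) - 1 := by
    rw [hmdef, Nat.cast_sub (by omega)]; norm_num
  have hn1 : (0:ℝ) < (n : ℝ) - 1 := by
    have : (2:ℝ) ≤ n := by exact_mod_cast hn
    linarith
  have hnpos : (0:ℝ) < n := by linarith
  set a : ℝ := n * H / ((n : ℝ) - 1) with hadef
  have ha0 : 0 < a := by positivity
  have ha1 : a < 1 := by
    have h := (lt_div_iff₀ hnpos).1 hH1
    rw [hadef, div_lt_one hn1]
    nlinarith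
  -- continuity
  have hIc : Continuous (Ifun m) :=
    intervalIntegral.continuous_primitive
      (fun a b => (Real.continuous_sinh.pow m).intervalIntegrable a b) 0
  have hnum : Continuous (fun t => (n:ℝ) * H * Ifun m t + d) :=
    (continuous_const.mul hIc).add continuous_const
  have hMc : Continuous (Mfun n H d) := by
    unfold Mfun
    exact ((Real.continuous_sinh.pow _).sub (continuous_const.mul hIc)).sub continuous_const
  have hPc : Continuous (Pfun n H d) := by
    unfold Pfun
    exact ((Real.continuous_sinh.pow _).add (continuous_const.mul hIc)).add continuous_const
  have hQcont : ContinuousOn (Qfun n H d) (Set.Ici ρ₀) := by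
    unfold Qfun
    apply ContinuousOn.div (hnum.continuousOn)
      ((Real.continuous_sqrt.comp (hMc.mul hPc)).continuousOn)
    intro t ht
    have := hMP t ht
    exact ne_of_gt (Real.sqrt_pos.2 (mul_pos this.1 this.2))
  have hint : ∀ x, ρ₀ ≤ x → IntervalIntegrable (Qfun n H d) volume ρ₀ x := by
    intro x hx
    apply ContinuousOn.intervalIntegrable
    apply hQcont.mono
    rw [Set.uIcc_of_le hx]
    exact Set.Icc_subset_Ici_self
  -- the limit of Q
  set u : ℝ → ℝ := fun t => ((n:ℝ) * H * Ifun m t + d) / Real.sinh t ^ m with hudef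
  have hu : Tendsto u atTop (𝓝 a) := by
    have h1 : Tendsto (fun t => (n:ℝ) * H * (Ifun m t / Real.sinh t ^ m)
        + d * (Real.sinh t ^ m)⁻¹) atTop (𝓝 ((n:ℝ) * H * (1 / (m:ℝ)) + d * 0)) :=
      (tendsto_const_nhds.mul (ratio_tendsto m hm)).add
        (tendsto_const_nhds.mul (inv_pow_sinh_tendsto m hm))
    have h2 : (n:ℝ) * H * (1 / (m:ℝ)) + d * 0 = a := by
      rw [hadef, hmcast]; field_simp; ring
    rw [h2] at h1
    apply h1.congr'
    filter_upwards [eventually_ge_atTop (2:ℝ)] with t ht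
    have hspos : 0 < Real.sinh t := by linarith [one_le_sinh_s8 ht]
    have hSpos : 0 < Real.sinh t ^ m := pow_pos hspos m
    rw [hudef]
    field_simp
  have hQeq : (Qfun n H d) =ᶠ[atTop]
      (fun t => u t / Real.sqrt ((1 - u t) * (1 + u t))) := by
    filter_upwards [eventually_ge_atTop ρ₀] with t ht
    have hspos : 0 < Real.sinh t := Real.sinh_pos_iff.2 (lt_of_lt_of_le hρ₀ ht)
    have hSpos : 0 < Real.sinh t ^ m := pow_pos hspos m
    obtain ⟨hMpos, hPpos⟩ := hMP t ht
    have hMu : Mfun n H d t = Real.sinh t ^ m * (1 - u t) := by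
      rw [Mfun, hudef, ← hmdef]
      field_simp
      ring
    have hPu : Pfun n H d t = Real.sinh t ^ m * (1 + u t) := by
      rw [Pfun, hudef, ← hmdef]
      field_simp
      ring
    have hprod : Mfun n H d t * Pfun n H d t
        = Real.sinh t ^ m * Real.sinh t ^ m * ((1 - u t) * (1 + u t)) := by
      rw [hMu, hPu]; ring
    have hw : 0 < (1 - u t) * (1 + u t) := by
      have : 0 < Real.sinh t ^ m * Real.sinh t ^ m := by positivity
      nlinarith [mul_pos hMpos hPpos]
    have hsqrt : Real.sqrt (Mfun n H d t * Pfun n H d t)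
        = Real.sinh t ^ m * Real.sqrt ((1 - u t) * (1 + u t)) := by
      rw [hprod, Real.sqrt_mul (by positivity), Real.sqrt_mul_self hSpos.le]
    have hnumu : (n:ℝ) * H * Ifun m t + d = Real.sinh t ^ m * u t := by
      rw [hudef]; field_simp
    rw [Qfun, ← hmdef, hsqrt, hnumu,
      mul_div_mul_left _ _ (ne_of_gt hSpos)]
  have hlim : Tendsto (fun t => u t / Real.sqrt ((1 - u t) * (1 + u t))) atTop
      (𝓝 (a / Real.sqrt ((1 - a) * (1 + a)))) := by
    apply Tendsto.div hu
    · exact (Real.continuous_sqrt.tendsto _).comp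
        ((tendsto_const_nhds.sub hu).mul (tendsto_const_nhds.add hu))
    · apply ne_of_gt
      apply Real.sqrt_pos.2
      nlinarith
  have hQlim : Tendsto (Qfun n H d) atTop (𝓝 (a / Real.sqrt (1 - a ^ 2))) := by
    have : (1 - a) * (1 + a) = 1 - a ^ 2 := by ring
    rw [← this]
    exact hlim.congr' hQeq.symm
  exact cesaro_aux hint hQlim
end

section
/- Let n = 2, H = 1/2 and 0 ≤ d < 1. Choose ρ₀ > 0 such that M_{H,d} > 0 on [ρ₀, ∞), and define λ(ρ) := ∫_{ρ₀}^{ρ} Q_{H,d}(t) dt for ρ ≥ ρ₀. Then lim_{ρ→∞} e^{−ρ/2}·λ(ρ) = 1/√(1 − d). -/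
open Filter Topology

lemma Mfun_eq (d t : ℝ) : Mfun 2 (1/2) d t = (1 - d) - Real.exp (-t) := by
  have h := Real.cosh_sub_sinh t
  simp only [Mfun]
  norm_num [Ifun_one]
  linarith

lemma Pfun_eq (d t : ℝ) : Pfun 2 (1/2) d t = Real.exp t - (1 - d) := by
  have h := Real.sinh_add_cosh t
  simp only [Pfun]
  norm_num [Ifun_one]
  linarith

lemma Qfun_eq (d t : ℝ) : Qfun 2 (1/2) d t =
    (Real.cosh t - (1 - d)) /
      Real.sqrt (((1 - d) - Real.exp (-t)) * (Real.exp t - (1 - d))) := by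
  rw [Qfun, Mfun_eq, Pfun_eq]
  norm_num [Ifun_one]
  ring_nf

lemma hbound (c x₀ x : ℝ) (hc : 0 < c) (hc1 : c ≤ 1) (hx₀c : x₀ < c)
    (hx0 : 0 < x) (hxx₀ : x ≤ x₀) :
    |(1 - 2*c*x + x^2) / (2 * Real.sqrt ((c - x) * (1 - c*x))) - 1/(2*Real.sqrt c)|
      ≤ (7/(Real.sqrt c * ((c-x₀)*(1-c*x₀)))) * x := by
  have hxc : x < c := lt_of_le_of_lt hxx₀ hx₀c
  have hx1 : x < 1 := lt_of_lt_of_le hxc hc1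
  have hcx : 0 < c - x := by linarith
  have h1cx : 0 < 1 - c*x := by nlinarith
  have hx₀0 : 0 < x₀ := lt_of_lt_of_le hx0 hxx₀
  have hcx0 : 0 < c - x₀ := by linarith
  have h1cx0 : 0 < 1 - c*x₀ := by nlinarith
  have hD : 0 < (c-x₀)*(1-c*x₀) := mul_pos hcx0 h1cx0
  set B := Real.sqrt ((c - x) * (1 - c*x)) with hBdef
  have hBpos : 0 < B := Real.sqrt_pos.2 (by positivity)
  have hB2 : B^2 = (c-x)*(1-c*x) := Real.sq_sqrt (by positivity)
  have hDB : (c-x₀)*(1-c*x₀) ≤ B^2 := by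
    rw [hB2]
    have h1 : c - x₀ ≤ c - x := by linarith
    have h2 : 1 - c*x₀ ≤ 1 - c*x := by nlinarith
    nlinarith
  have hsc : 0 < Real.sqrt c := Real.sqrt_pos.2 hc
  have hsc2 : Real.sqrt c ^ 2 = c := Real.sq_sqrt hc.le
  have hp : 0 ≤ 1 - 2*c*x + x^2 := by nlinarith
  have hA : 0 ≤ Real.sqrt c * (1 - 2*c*x + x^2) := by positivity
  have hqb : |1 - 3*c^2 + (4*c^3+c)*x - 4*c^2*x^2 + c*x^3| ≤ 14 := by
    rw [abs_le]; constructor <;> nlinarith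
  have hq : |(Real.sqrt c * (1 - 2*c*x + x^2))^2 - B^2| ≤ 14 * x := by
    have : (Real.sqrt c * (1 - 2*c*x + x^2))^2 - B^2
        = x * (1 - 3*c^2 + (4*c^3+c)*x - 4*c^2*x^2 + c*x^3) := by
      rw [mul_pow, hsc2, hB2]; ring
    rw [this, abs_mul, abs_of_pos hx0]
    calc x * |1 - 3*c^2 + (4*c^3+c)*x - 4*c^2*x^2 + c*x^3| ≤ x * 14 :=
          mul_le_mul_of_nonneg_left hqb hx0.le
      _ = 14 * x := by ring
  have hABle : |Real.sqrt c * (1 - 2*c*x + x^2) - B| * B ≤ 14 * x := by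
    calc |Real.sqrt c * (1 - 2*c*x + x^2) - B| * B
        ≤ |Real.sqrt c * (1 - 2*c*x + x^2) - B| * (Real.sqrt c * (1 - 2*c*x + x^2) + B) := by
          apply mul_le_mul_of_nonneg_left _ (abs_nonneg _)
          linarith
      _ = |Real.sqrt c * (1 - 2*c*x + x^2) - B| * |Real.sqrt c * (1 - 2*c*x + x^2) + B| := by
          rw [abs_of_nonneg (by linarith : (0:ℝ) ≤ Real.sqrt c * (1 - 2*c*x + x^2) + B)]
      _ = |(Real.sqrt c * (1 - 2*c*x + x^2))^2 - B^2| := by rw [← abs_mul]; ring_nf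
      _ ≤ 14 * x := hq
  have heq : (1 - 2*c*x + x^2) / (2 * B) - 1/(2*Real.sqrt c)
      = (Real.sqrt c * (1 - 2*c*x + x^2) - B) / (2 * (Real.sqrt c * B)) := by
    field_simp
  rw [heq, abs_div, abs_of_pos (by positivity : (0:ℝ) < 2 * (Real.sqrt c * B))]
  rw [div_le_iff₀ (by positivity)]
  have h14 : |Real.sqrt c * (1 - 2*c*x + x^2) - B| ≤ 14 * x / B := by
    rw [le_div_iff₀ hBpos]; exact hABle
  calc |Real.sqrt c * (1 - 2*c*x + x^2) - B| ≤ 14 * x / B := h14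
    _ ≤ 14*x*B/((c-x₀)*(1-c*x₀)) := by
        rw [div_le_div_iff₀ hBpos hD]
        nlinarith [mul_le_mul_of_nonneg_left hDB (by positivity : (0:ℝ) ≤ 14*x)]
    _ = 7/(Real.sqrt c * ((c-x₀)*(1-c*x₀))) * x * (2 * (Real.sqrt c * B)) := by
        field_simp
        ring

lemma Qformula (c t : ℝ) (hc : 0 < c) (hc1 : c ≤ 1) (ht : 0 < t)
    (hx : Real.exp (-t) < c) :
    (Real.cosh t - c) / Real.sqrt ((c - Real.exp (-t)) * (Real.exp t - c)) =
      Real.exp (t/2) * ((1 - 2*c*Real.exp (-t) + Real.exp (-t)^2) /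
        (2 * Real.sqrt ((c - Real.exp (-t)) * (1 - c*Real.exp (-t))))) := by
  set E := Real.exp (t/2) with hEdef
  have hE : 0 < E := Real.exp_pos _
  have hexpt : Real.exp t = E^2 := by
    rw [hEdef, ← Real.exp_nat_mul]
    norm_num
    ring_nf
  have hexpnt : Real.exp (-t) = (E^2)⁻¹ := by rw [Real.exp_neg, hexpt]
  have hE2 : (0:ℝ) < E^2 := by positivity
  have hE1 : 1 < E^2 := by rw [← hexpt]; exact Real.one_lt_exp_iff.2 ht
  have h1 : 0 < c*E^2 - 1 := by
    have h' : (E^2)⁻¹ < c := by rw [← hexpnt]; exact hx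
    have h'' : (E^2)⁻¹ * E^2 = 1 := inv_mul_cancel₀ (ne_of_gt hE2)
    nlinarith [mul_lt_mul_of_pos_right h' hE2]
  have h2 : 0 < E^2 - c := by nlinarith
  have hS : 0 < Real.sqrt ((c*E^2 - 1) * (E^2 - c)) :=
    Real.sqrt_pos.2 (mul_pos h1 h2)
  have hs1 : Real.sqrt ((c - Real.exp (-t)) * (Real.exp t - c))
      = Real.sqrt ((c*E^2 - 1) * (E^2 - c)) / E := by
    have harg : (c - Real.exp (-t)) * (Real.exp t - c) = ((c*E^2 - 1) * (E^2 - c)) / E^2 := by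
      rw [hexpt, hexpnt]; field_simp
    rw [harg, Real.sqrt_div (mul_pos h1 h2).le, Real.sqrt_sq hE.le]
  have hs2 : Real.sqrt ((c - Real.exp (-t)) * (1 - c*Real.exp (-t)))
      = Real.sqrt ((c*E^2 - 1) * (E^2 - c)) / E^2 := by
    have harg : (c - Real.exp (-t)) * (1 - c*Real.exp (-t))
        = ((c*E^2 - 1) * (E^2 - c)) / (E^2)^2 := by
      rw [hexpnt]; field_simp
    rw [harg, Real.sqrt_div (mul_pos h1 h2).le, Real.sqrt_sq hE2.le]
  have hcosh : Real.cosh t = (E^2 + (E^2)⁻¹)/2 := by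
    rw [Real.cosh_eq, hexpt, hexpnt]
  rw [hs1, hs2, hcosh, hexpnt]
  rw [div_div_eq_mul_div]
  field_simp
  ring

lemma integral_exp_half (ρ₀ ρ : ℝ) :
    ∫ t in ρ₀..ρ, Real.exp (t/2) = 2*Real.exp (ρ/2) - 2*Real.exp (ρ₀/2) := by
  have hd : ∀ t ∈ Set.uIcc ρ₀ ρ, HasDerivAt (fun y => 2*Real.exp (y/2)) (Real.exp (t/2)) t := by
    intro t _
    have h : HasDerivAt (fun y => 2*Real.exp (y/2)) (2 * (Real.exp (t/2) * (1/2))) t := by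
      have h0 := ((Real.hasDerivAt_exp (t/2)).comp t ((hasDerivAt_id t).div_const 2)).const_mul 2
      exact h0
    convert h using 1
    ring
  have hc : Continuous (fun t : ℝ => Real.exp (t/2)) := by fun_prop
  exact intervalIntegral.integral_eq_sub_of_hasDerivAt hd (hc.intervalIntegrable _ _)

lemma integral_exp_neg_half (ρ₀ ρ : ℝ) :
    ∫ t in ρ₀..ρ, Real.exp (-(t/2)) = 2*Real.exp (-(ρ₀/2)) - 2*Real.exp (-(ρ/2)) := by
  have hd : ∀ t ∈ Set.uIcc ρ₀ ρ,
      HasDerivAt (fun y => -2*Real.exp (-(y/2))) (Real.exp (-(t/2))) t := by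
    intro t _
    have h : HasDerivAt (fun y => -2*Real.exp (-(y/2))) (-2 * (Real.exp (-(t/2)) * -(1/2))) t :=
      ((Real.hasDerivAt_exp (-(t/2))).comp t
      (((hasDerivAt_id t).div_const 2).neg)).const_mul (-2)
    convert h using 1
    ring
  have hc : Continuous (fun t : ℝ => Real.exp (-(t/2))) := by fun_prop
  rw [intervalIntegral.integral_eq_sub_of_hasDerivAt hd (hc.intervalIntegrable _ _)]
  ring

/-- Let `n = 2`, `H = 1/2` and `0 ≤ d < 1`. Let `ρ₀ > 0` be such that `M_{H,d} > 0` on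
`[ρ₀, ∞)`, and set `λ(ρ) := ∫_{ρ₀}^{ρ} Q_{H,d}(t) dt`. Then
`lim_{ρ→∞} e^{−ρ/2}·λ(ρ) = 1/√(1 − d)`. -/
theorem stmt9 (d : ℝ) (hd0 : 0 ≤ d) (hd1 : d < 1)
    (ρ₀ : ℝ) (hρ₀ : 0 < ρ₀)
    (hM : ∀ t, ρ₀ ≤ t → 0 < Mfun 2 (1 / 2) d t) :
    Tendsto (fun ρ : ℝ => Real.exp (-ρ / 2) * ∫ t in ρ₀..ρ, Qfun 2 (1 / 2) d t) atTop
      (𝓝 (1 / Real.sqrt (1 - d))) := by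
  set c : ℝ := 1 - d with hcdef
  have hc : 0 < c := by rw [hcdef]; linarith
  have hc1 : c ≤ 1 := by rw [hcdef]; linarith
  set x₀ : ℝ := Real.exp (-ρ₀) with hx₀def
  have hx₀pos : 0 < x₀ := Real.exp_pos _
  have hx₀c : x₀ < c := by
    have := hM ρ₀ le_rfl
    rw [Mfun_eq] at this
    rw [hcdef, hx₀def]; linarith
  have hcx0 : 0 < c - x₀ := by linarith
  have h1cx0 : 0 < 1 - c*x₀ := by nlinarith
  have hsc : 0 < Real.sqrt c := Real.sqrt_pos.2 hc
  set K : ℝ := 7/(Real.sqrt c * ((c-x₀)*(1-c*x₀))) with hKdef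
  have hK : 0 < K := by rw [hKdef]; positivity
  -- pointwise bound
  have hkey : ∀ t, ρ₀ ≤ t →
      |Qfun 2 (1/2) d t - Real.exp (t/2) / (2*Real.sqrt c)| ≤ K * Real.exp (-(t/2)) := by
    intro t ht
    have htpos : 0 < t := lt_of_lt_of_le hρ₀ ht
    have hxt : Real.exp (-t) ≤ x₀ := by
      rw [hx₀def]; exact Real.exp_le_exp.2 (by linarith)
    have hxtc : Real.exp (-t) < c := lt_of_le_of_lt hxt hx₀c
    rw [Qfun_eq, ← hcdef, Qformula c t hc hc1 htpos hxtc]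
    have hb := hbound c x₀ (Real.exp (-t)) hc hc1 hx₀c (Real.exp_pos _) hxt
    rw [← hKdef] at hb
    calc |Real.exp (t/2) * ((1 - 2*c*Real.exp (-t) + Real.exp (-t)^2) /
            (2 * Real.sqrt ((c - Real.exp (-t)) * (1 - c*Real.exp (-t)))))
          - Real.exp (t/2) / (2*Real.sqrt c)|
        = Real.exp (t/2) * |(1 - 2*c*Real.exp (-t) + Real.exp (-t)^2) /
            (2 * Real.sqrt ((c - Real.exp (-t)) * (1 - c*Real.exp (-t))))
            - 1/(2*Real.sqrt c)| := by
          rw [show Real.exp (t/2) * ((1 - 2*c*Real.exp (-t) + Real.exp (-t)^2) /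
            (2 * Real.sqrt ((c - Real.exp (-t)) * (1 - c*Real.exp (-t)))))
            - Real.exp (t/2) / (2*Real.sqrt c)
            = Real.exp (t/2) * ((1 - 2*c*Real.exp (-t) + Real.exp (-t)^2) /
            (2 * Real.sqrt ((c - Real.exp (-t)) * (1 - c*Real.exp (-t))))
            - 1/(2*Real.sqrt c)) from by ring]
          rw [abs_mul, abs_of_pos (Real.exp_pos _)]
      _ ≤ Real.exp (t/2) * (K * Real.exp (-t)) :=
          mul_le_mul_of_nonneg_left hb (Real.exp_pos _).le
      _ = K * Real.exp (-(t/2)) := by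
          rw [show Real.exp (t/2) * (K * Real.exp (-t))
              = K * (Real.exp (t/2) * Real.exp (-t)) from by ring, ← Real.exp_add,
            show t/2 + -t = -(t/2) from by ring]
  -- continuity of Q on [ρ₀, ∞)
  have hQc : ContinuousOn (Qfun 2 (1/2) d) (Set.Ici ρ₀) := by
    have hcont : ContinuousOn
        (fun t => (Real.cosh t - c) / Real.sqrt ((c - Real.exp (-t)) * (Real.exp t - c)))
        (Set.Ici ρ₀) := by
      apply ContinuousOn.div
      · exact (Real.continuous_cosh.sub continuous_const).continuousOn
      · exact (Real.continuous_sqrt.comp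
          ((continuous_const.sub (Real.continuous_exp.comp continuous_neg)).mul
            (Real.continuous_exp.sub continuous_const))).continuousOn
      · intro t ht
        have h1 : 0 < c - Real.exp (-t) := by
          have := hM t ht
          rw [Mfun_eq] at this
          rw [hcdef]; linarith
        have h2 : 0 < Real.exp t - c := by
          have : 1 < Real.exp t := Real.one_lt_exp_iff.2 (lt_of_lt_of_le hρ₀ ht)
          linarith
        exact ne_of_gt (Real.sqrt_pos.2 (mul_pos h1 h2))
    refine hcont.congr fun t _ => ?_
    rw [Qfun_eq, ← hcdef]
  have hQint : ∀ ρ, ρ₀ ≤ ρ → IntervalIntegrable (Qfun 2 (1/2) d) MeasureTheory.volume ρ₀ ρ := by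
    intro ρ hρ
    refine (hQc.mono ?_).intervalIntegrable
    rw [Set.uIcc_of_le hρ]
    exact Set.Icc_subset_Ici_self
  have hbcont : Continuous (fun t : ℝ => Real.exp (t/2) / (2*Real.sqrt c)) := by fun_prop
  -- splitting
  set G : ℝ → ℝ := fun ρ => ∫ t in ρ₀..ρ, (Qfun 2 (1/2) d t - Real.exp (t/2) / (2*Real.sqrt c))
    with hGdef
  have hGsplit : ∀ ρ, ρ₀ ≤ ρ → (∫ t in ρ₀..ρ, Qfun 2 (1/2) d t)
      = (Real.exp (ρ/2) - Real.exp (ρ₀/2))/Real.sqrt c + G ρ := by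
    intro ρ hρ
    have h1 : G ρ = (∫ t in ρ₀..ρ, Qfun 2 (1/2) d t)
        - ∫ t in ρ₀..ρ, Real.exp (t/2) / (2*Real.sqrt c) := by
      rw [hGdef]
      exact intervalIntegral.integral_sub (hQint ρ hρ) (hbcont.intervalIntegrable _ _)
    have h2 : (∫ t in ρ₀..ρ, Real.exp (t/2) / (2*Real.sqrt c))
        = (Real.exp (ρ/2) - Real.exp (ρ₀/2))/Real.sqrt c := by
      rw [intervalIntegral.integral_div, integral_exp_half]
      field_simp
    rw [h2] at h1
    linarith
  -- bound on G
  have hGbd : ∀ ρ, ρ₀ ≤ ρ → |G ρ| ≤ 2*K*Real.exp (-(ρ₀/2)) := by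
    intro ρ hρ
    have hint : IntervalIntegrable
        (fun t => Qfun 2 (1/2) d t - Real.exp (t/2) / (2*Real.sqrt c))
        MeasureTheory.volume ρ₀ ρ :=
      (hQint ρ hρ).sub (hbcont.intervalIntegrable _ _)
    calc |G ρ| ≤ ∫ t in ρ₀..ρ, |Qfun 2 (1/2) d t - Real.exp (t/2) / (2*Real.sqrt c)| :=
          intervalIntegral.abs_integral_le_integral_abs hρ
      _ ≤ ∫ t in ρ₀..ρ, K * Real.exp (-(t/2)) := by
          refine intervalIntegral.integral_mono_on hρ hint.abs
            ((by fun_prop : Continuous fun t:ℝ => K * Real.exp (-(t/2))).intervalIntegrable _ _) ?_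
          intro t ht
          exact hkey t ht.1
      _ = K * (2*Real.exp (-(ρ₀/2)) - 2*Real.exp (-(ρ/2))) := by
          rw [intervalIntegral.integral_const_mul, integral_exp_neg_half]
      _ ≤ 2*K*Real.exp (-(ρ₀/2)) := by nlinarith [Real.exp_pos (-(ρ/2)), hK]
  -- limits
  have hexp2 : Tendsto (fun ρ:ℝ => Real.exp (-(ρ/2))) atTop (𝓝 0) := by
    apply Real.tendsto_exp_atBot.comp
    exact tendsto_neg_atTop_atBot.comp (tendsto_id.atTop_div_const two_pos)
  have t1 : Tendsto (fun ρ:ℝ => (1 - Real.exp (-(ρ/2)) * Real.exp (ρ₀/2))/Real.sqrt c)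
      atTop (𝓝 (1/Real.sqrt c)) := by
    have h0 : Tendsto (fun ρ:ℝ => 1 - Real.exp (-(ρ/2)) * Real.exp (ρ₀/2)) atTop
        (𝓝 (1 - 0 * Real.exp (ρ₀/2))) :=
      tendsto_const_nhds.sub (hexp2.mul_const _)
    simpa using h0.div_const (Real.sqrt c)
  have t2 : Tendsto (fun ρ:ℝ => Real.exp (-(ρ/2)) * G ρ) atTop (𝓝 0) := by
    apply squeeze_zero_norm' ?_ (by simpa using hexp2.const_mul (2*K*Real.exp (-(ρ₀/2))))
    filter_upwards [eventually_ge_atTop ρ₀] with ρ hρ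
    rw [Real.norm_eq_abs, abs_mul, abs_of_pos (Real.exp_pos _)]
    calc Real.exp (-(ρ/2)) * |G ρ| ≤ Real.exp (-(ρ/2)) * (2*K*Real.exp (-(ρ₀/2))) :=
          mul_le_mul_of_nonneg_left (hGbd ρ hρ) (Real.exp_pos _).le
      _ = 2*K*Real.exp (-(ρ₀/2)) * Real.exp (-(ρ/2)) := by ring
  have hlim : Tendsto (fun ρ:ℝ => (1 - Real.exp (-(ρ/2)) * Real.exp (ρ₀/2))/Real.sqrt c
      + Real.exp (-(ρ/2)) * G ρ) atTop (𝓝 (1/Real.sqrt c)) := by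
    simpa using t1.add t2
  refine hlim.congr' ?_
  filter_upwards [eventually_ge_atTop ρ₀] with ρ hρ
  have hmul : Real.exp (-(ρ/2)) * Real.exp (ρ/2) = 1 := by
    rw [← Real.exp_add]; norm_num
  have hmul' : Real.exp (-ρ/2) * Real.exp (ρ/2) = 1 := by
    rw [← Real.exp_add, show -ρ/2 + ρ/2 = 0 from by ring, Real.exp_zero]
  rw [show -ρ/2 = -(ρ/2) from by ring, hGsplit ρ hρ]
  field_simp
  linear_combination -hmul
end

section
/- Let n ≥ 3 be an integer, H = (n-1)/n and d ∈ ℝ. Then R_{H,d} is strictly decreasing on (0, ∞) and R_{H,d}(t) → −∞ as t → ∞. Consequently, if d < 1 there is a unique c > 0 with R_{H,d}(c) = 0, with R_{H,d} > 0 on [0, c) and R_{H,d} < 0 on (c, ∞); and if d ≥ 1 then R_{H,d}(t) < 0 for all t > 0. -/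
open Filter Topology

/-- `Jfun m t = ∫₀ᵗ cosh^m(r) dr`. -/
noncomputable def Jfun (m : ℕ) (t : ℝ) : ℝ := ∫ r in (0:ℝ)..t, Real.cosh r ^ m

/-- `Rfun n H d t = cosh^{n-1}(t) − nH·J_{n-1}(t) − d`. -/
noncomputable def Rfun (n : ℕ) (H d t : ℝ) : ℝ :=
  Real.cosh t ^ (n - 1) - n * H * Jfun (n - 1) t - d

/-- `Sfun n H d t = cosh^{n-1}(t) + nH·J_{n-1}(t) + d`. -/
noncomputable def Sfun (n : ℕ) (H d t : ℝ) : ℝ :=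
  Real.cosh t ^ (n - 1) + n * H * Jfun (n - 1) t + d

/-- `Tfun n H d t = (nH·J_{n-1}(t) + d)/√(R·S)`. -/
noncomputable def Tfun (n : ℕ) (H d t : ℝ) : ℝ :=
  (n * H * Jfun (n - 1) t + d) / Real.sqrt (Rfun n H d t * Sfun n H d t)

/-- Let `n ≥ 3`, `H = (n-1)/n` and `d ∈ ℝ`. Then `R_{H,d}` is strictly decreasing on
`(0,∞)` and tends to `−∞` at `+∞`. Consequently, if `d < 1` there is a unique `c > 0`
with `R_{H,d}(c) = 0`, `R_{H,d} > 0` on `[0,c)` and `R_{H,d} < 0` on `(c,∞)`; and if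
`d ≥ 1` then `R_{H,d}(t) < 0` for all `t > 0`. -/
theorem stmt17 (n : ℕ) (hn : 3 ≤ n) (H d : ℝ) (hH : H = ((n : ℝ) - 1) / n) :
    StrictAntiOn (Rfun n H d) (Set.Ioi 0) ∧
    Tendsto (Rfun n H d) atTop atBot ∧
    (d < 1 → ∃ c : ℝ, 0 < c ∧ Rfun n H d c = 0 ∧
      (∀ t, 0 ≤ t → t < c → 0 < Rfun n H d t) ∧
      (∀ t, c < t → Rfun n H d t < 0) ∧
      (∀ c', 0 < c' → Rfun n H d c' = 0 → c' = c)) ∧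
    (1 ≤ d → ∀ t : ℝ, 0 < t → Rfun n H d t < 0) := by
  set m := n - 1 with hm
  have hm2 : 2 ≤ m := by omega
  have hmpos : (0:ℝ) < (m:ℝ) := by exact_mod_cast (by omega : 0 < m)
  have hn0 : (n:ℝ) ≠ 0 := by exact_mod_cast (by omega : n ≠ 0)
  have hnH : (n:ℝ) * H = (m:ℝ) := by
    rw [hH, hm]
    rw [Nat.cast_sub (by omega : 1 ≤ n)]
    field_simp
    simp
  -- derivative of Jfun
  have hJ : ∀ t : ℝ, HasDerivAt (Jfun m) (Real.cosh t ^ m) t := fun t =>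
    ((Real.continuous_cosh.pow m).integral_hasStrictDerivAt 0 t).hasDerivAt
  -- derivative of Rfun
  have hR : ∀ t : ℝ, HasDerivAt (Rfun n H d)
      (-((m:ℝ) * (Real.cosh t ^ (m - 1) * Real.exp (-t)))) t := by
    intro t
    have h1 : HasDerivAt (fun x => Real.cosh x ^ m)
        ((m:ℝ) * Real.cosh t ^ (m - 1) * Real.sinh t) t := (Real.hasDerivAt_cosh t).pow m
    have h2 := (hJ t).const_mul ((n:ℝ) * H)
    have h3 := (h1.sub h2).sub_const d
    have heq : Rfun n H d = fun t => Real.cosh t ^ m - (n:ℝ) * H * Jfun m t - d := by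
      funext s; simp [Rfun, hm]
    rw [heq]
    refine h3.congr_deriv ?_
    rw [hnH]
    have hpow : Real.cosh t ^ m = Real.cosh t ^ (m - 1) * Real.cosh t := by
      conv_lhs => rw [show m = (m - 1) + 1 by omega]
      rw [pow_succ]
    rw [hpow, ← Real.cosh_sub_sinh]
    ring
  have hderiv : ∀ t : ℝ, deriv (Rfun n H d) t
      = -((m:ℝ) * (Real.cosh t ^ (m - 1) * Real.exp (-t))) := fun t => (hR t).deriv
  have hanti : StrictAnti (Rfun n H d) := by
    apply strictAnti_of_deriv_neg
    intro t
    rw [hderiv t]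
    have h := mul_pos hmpos (mul_pos (pow_pos (Real.cosh_pos (x := t)) (m - 1)) (Real.exp_pos (-t)))
    linarith
  have hcont : Continuous (Rfun n H d) := by
    have : Differentiable ℝ (Rfun n H d) := fun t => (hR t).differentiableAt
    exact this.continuous
  -- linear bound on [0, ∞)
  set c0 : ℝ := (m:ℝ) / 2 ^ (m - 1) with hc0
  have hc0pos : 0 < c0 := by positivity
  have hbound : ∀ t : ℝ, 0 ≤ t → Rfun n H d t ≤ Rfun n H d 0 - c0 * t := by
    have hg : AntitoneOn (fun t => Rfun n H d t + c0 * t) (Set.Ici 0) := by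
      apply antitoneOn_of_deriv_nonpos (convex_Ici 0)
      · exact (hcont.add (continuous_const.mul continuous_id)).continuousOn
      · intro x _
        exact ((hR x).add ((hasDerivAt_id x).const_mul c0)).differentiableAt.differentiableWithinAt
      · intro x hx
        rw [interior_Ici] at hx
        have hx0 : (0:ℝ) ≤ x := le_of_lt hx
        have hdx : deriv (fun t => Rfun n H d t + c0 * t)  x
            = -((m:ℝ) * (Real.cosh x ^ (m - 1) * Real.exp (-x))) + c0 * 1 := by
          exact ((hR x).add ((hasDerivAt_id x).const_mul c0)).deriv
        rw [hdx]
        have hlow : (1:ℝ) / 2 ^ (m - 1) ≤ Real.cosh x ^ (m - 1) * Real.exp (-x) := by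
          have h1 : Real.exp x / 2 ≤ Real.cosh x := by
            rw [Real.cosh_eq]
            have := Real.exp_pos (-x)
            linarith
          have h2 : (Real.exp x / 2) ^ (m - 1) ≤ Real.cosh x ^ (m - 1) := by
            apply pow_le_pow_left₀ (by positivity) h1
          have h3 : (Real.exp x / 2) ^ (m - 1) * Real.exp (-x)
              ≤ Real.cosh x ^ (m - 1) * Real.exp (-x) := by
            exact mul_le_mul_of_nonneg_right h2 (Real.exp_pos _).le
          refine le_trans ?_ h3
          rw [div_pow, ← Real.exp_nat_mul, div_mul_eq_mul_div, div_le_div_iff₀ (by positivity) (by positivity)]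
          rw [← Real.exp_add]
          have : (1:ℝ) ≤ Real.exp ((m - 1 : ℕ) * x + -x) := by
            rw [Real.one_le_exp_iff]
            have : ((m:ℝ) - 1 - 1) * x ≥ 0 := by
              apply mul_nonneg _ hx0
              have : (2:ℝ) ≤ (m:ℝ) := by exact_mod_cast hm2
              linarith
            have hcast : ((m - 1 : ℕ) : ℝ) = (m:ℝ) - 1 := by
              rw [Nat.cast_sub (by omega : 1 ≤ m)]; simp
            rw [hcast]; nlinarith
          nlinarith [pow_pos (one_pos.trans_le one_le_two : (0:ℝ) < 2) (m-1)]
        have hlow' : (1:ℝ) ≤ Real.cosh x ^ (m - 1) * Real.exp (-x) * 2 ^ (m - 1) := by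
          rw [← div_le_iff₀ (by positivity : (0:ℝ) < 2 ^ (m - 1))]
          exact hlow
        have : c0 ≤ (m:ℝ) * (Real.cosh x ^ (m - 1) * Real.exp (-x)) := by
          rw [hc0, div_le_iff₀ (by positivity)]
          nlinarith [mul_le_mul_of_nonneg_left hlow' hmpos.le]
        linarith
    intro t ht
    have := hg (Set.self_mem_Ici) (Set.mem_Ici.mpr ht) ht
    simp only [mul_zero, add_zero] at this
    linarith
  have htends : Tendsto (Rfun n H d) atTop atBot := by
    apply tendsto_atBot_mono' atTop (f₁ := fun t => Rfun n H d 0 - c0 * t)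
    · filter_upwards [eventually_ge_atTop (0:ℝ)] with t ht using hbound t ht
    · have h1 : Tendsto (fun t : ℝ => c0 * t) atTop atTop :=
        Tendsto.const_mul_atTop hc0pos tendsto_id
      have h2 : Tendsto (fun t : ℝ => -(c0 * t)) atTop atBot := tendsto_neg_atTop_atBot.comp h1
      have h3 := tendsto_atBot_add_const_left atTop (Rfun n H d 0) h2
      simpa [sub_eq_add_neg] using h3
  have hR0 : Rfun n H d 0 = 1 - d := by
    simp [Rfun, Jfun, intervalIntegral.integral_same]
  refine ⟨hanti.strictAntiOn _, htends, ?_, ?_⟩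
  · intro hd
    have hR0pos : 0 < Rfun n H d 0 := by rw [hR0]; linarith
    obtain ⟨T, hT0, hTneg⟩ : ∃ T : ℝ, 0 < T ∧ Rfun n H d T < 0 := by
      have h1 := htends.eventually (eventually_lt_atBot (0:ℝ))
      have h2 := eventually_gt_atTop (0:ℝ)
      exact (h2.and h1).exists
    have hsub := intermediate_value_Icc' hT0.le hcont.continuousOn
    have h0mem : (0:ℝ) ∈ Set.Icc (Rfun n H d T) (Rfun n H d 0) := ⟨hTneg.le, hR0pos.le⟩
    obtain ⟨c, hcmem, hc0⟩ := hsub h0mem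
    have hcpos : 0 < c := by
      rcases lt_or_eq_of_le hcmem.1 with h | h
      · exact h
      · exfalso; rw [← h] at hc0; rw [hc0] at hR0pos; exact lt_irrefl _ hR0pos
    refine ⟨c, hcpos, hc0, ?_, ?_, ?_⟩
    · intro t ht htc
      have := hanti htc
      rw [hc0] at this
      exact this
    · intro t hct
      have := hanti hct
      rw [hc0] at this
      exact this
    · intro c' _ hc'
      exact hanti.injective (hc'.trans hc0.symm)
  · intro hd t ht
    have := hanti ht
    rw [hR0] at this
    linarith
end

section
/- Let n ≥ 3 be an integer, H = (n-1)/n and d < −1. Then the function S_{H,d}(t) := cosh^{n-1}(t) + nH·J_{n-1}(t) + d has a unique zero α > 0, the function R_{H,d}(t) := cosh^{n-1}(t) − nH·J_{n-1}(t) − d has a unique zero c > 0, one has α < c with R_{H,d} > 0 and S_{H,d} > 0 on (α, c), and the function T_{H,d}(t) := (nH·J_{n-1}(t) + d)/√(R_{H,d}(t)·S_{H,d}(t)) is integrable on the interval (α, c) (the improper integral converges at both endpoints). -/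
open Filter Topology

open intervalIntegral MeasureTheory Set in
lemma Jfun_hasDerivAt (m : ℕ) (t : ℝ) :
    HasDerivAt (Jfun m) (Real.cosh t ^ m) t := by
  have hc : Continuous fun r : ℝ => Real.cosh r ^ m := Real.continuous_cosh.pow m
  exact integral_hasDerivAt_right (hc.intervalIntegrable 0 t)
    hc.aestronglyMeasurable.stronglyMeasurableAtFilter hc.continuousAt

open intervalIntegral MeasureTheory Set

set_option maxHeartbeats 1000000

/-- Let `n ≥ 3`, `H = (n-1)/n` and `d < −1`. Then `S_{H,d}` has a unique zero `α > 0`,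
`R_{H,d}` has a unique zero `c > 0`, `α < c`, one has `R_{H,d} > 0` and `S_{H,d} > 0` on
`(α, c)`, and `T_{H,d}` is integrable on `(α, c)`. -/
theorem stmt18 (n : ℕ) (hn : 3 ≤ n) (H d : ℝ) (hH : H = ((n : ℝ) - 1) / n) (hd : d < -1) :
    ∃ α c : ℝ, 0 < α ∧ Sfun n H d α = 0 ∧ (∀ x, 0 < x → Sfun n H d x = 0 → x = α) ∧
      0 < c ∧ Rfun n H d c = 0 ∧ (∀ x, 0 < x → Rfun n H d x = 0 → x = c) ∧
      α < c ∧
      (∀ t, α < t → t < c → 0 < Rfun n H d t ∧ 0 < Sfun n H d t) ∧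
      MeasureTheory.IntegrableOn (Tfun n H d) (Set.Ioo α c) := by
  set m : ℕ := n - 1 with hmdef
  have hm2 : 2 ≤ m := by omega
  have hmR : (2:ℝ) ≤ (m:ℝ) := by exact_mod_cast hm2
  have hnne : (n:ℝ) ≠ 0 := by positivity
  have hk : (n:ℝ) * H = (m:ℝ) := by
    rw [hH]; field_simp
    push_cast [hmdef, Nat.cast_sub (by omega : 1 ≤ n)]; ring
  -- derivatives
  have hS : ∀ t, HasDerivAt (Sfun n H d)
      ((m:ℝ) * Real.cosh t ^ (m-1) * Real.sinh t + (m:ℝ) * Real.cosh t ^ m) t := by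
    intro t
    have h1 := (Real.hasDerivAt_cosh t).pow m
    have h2 := ((Jfun_hasDerivAt m t).const_mul ((n:ℝ)*H)).add_const d
    have h3 := h1.add h2
    have he : Sfun n H d = fun u => Real.cosh u ^ m + ((n:ℝ)*H * Jfun m u + d) := by
      funext u; simp [Sfun]; ring
    rw [he, show (m:ℝ) * Real.cosh t ^ m = (n:ℝ)*H * Real.cosh t ^ m by rw [hk]]; exact h3
  have hR : ∀ t, HasDerivAt (Rfun n H d)
      ((m:ℝ) * Real.cosh t ^ (m-1) * Real.sinh t - (m:ℝ) * Real.cosh t ^ m) t := by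
    intro t
    have h1 := (Real.hasDerivAt_cosh t).pow m
    have h2 := ((Jfun_hasDerivAt m t).const_mul ((n:ℝ)*H)).add_const d
    have h3 := h1.sub h2
    have he : Rfun n H d = fun u => Real.cosh u ^ m - ((n:ℝ)*H * Jfun m u + d) := by
      funext u; simp [Rfun]; ring
    rw [he, show (m:ℝ) * Real.cosh t ^ m = (n:ℝ)*H * Real.cosh t ^ m by rw [hk]]; exact h3
  have hScont : Continuous (Sfun n H d) :=
    continuous_iff_continuousAt.mpr fun t => (hS t).differentiableAt.continuousAt
  have hRcont : Continuous (Rfun n H d) :=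
    continuous_iff_continuousAt.mpr fun t => (hR t).differentiableAt.continuousAt
  have hJcont : Continuous (Jfun m) :=
    continuous_iff_continuousAt.mpr fun t => (Jfun_hasDerivAt m t).differentiableAt.continuousAt
  -- basic facts
  have hcosh1 : ∀ t : ℝ, 1 ≤ Real.cosh t := fun t => Real.one_le_cosh t
  have hcoshpos : ∀ t : ℝ, 0 < Real.cosh t := fun t => Real.cosh_pos t
  have hpow1 : ∀ t : ℝ, 1 ≤ Real.cosh t ^ m := fun t => by
    simpa using pow_le_pow_left₀ zero_le_one (hcosh1 t) m
  have hm0 : (0:ℝ) < (m:ℝ) := by linarith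
  set k2 : ℝ := (m:ℝ) / 2^(m-1) with hk2def
  have hk2 : 0 < k2 := div_pos hm0 (by positivity)
  -- lower bound on cosh^{m-1} * exp(-t)
  have hlow : ∀ t : ℝ, 0 ≤ t → (1:ℝ)/2^(m-1) ≤ Real.cosh t ^ (m-1) * Real.exp (-t) := by
    intro t ht
    have he1 : (1:ℝ) ≤ Real.exp t := Real.one_le_exp ht
    have hep : (0:ℝ) < Real.exp t := Real.exp_pos t
    have h1 : Real.exp t / 2 ≤ Real.cosh t := by
      rw [Real.cosh_eq]
      nlinarith [Real.exp_pos (-t)]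
    have h2 : (Real.exp t / 2) ^ (m-1) ≤ Real.cosh t ^ (m-1) :=
      pow_le_pow_left₀ (by positivity) h1 _
    have h3 : Real.exp t ≤ (Real.exp t) ^ (m-1) := le_self_pow₀ he1 (by omega)
    have h4 : (Real.exp t / 2)^(m-1) = (Real.exp t)^(m-1)/2^(m-1) := div_pow _ _ _
    rw [Real.exp_neg t]
    calc (1:ℝ)/2^(m-1) = (Real.exp t / 2^(m-1)) * (Real.exp t)⁻¹ := by
          field_simp
      _ ≤ Real.cosh t ^ (m-1) * (Real.exp t)⁻¹ := by
          apply mul_le_mul_of_nonneg_right _ (by positivity)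
          calc Real.exp t / 2^(m-1) ≤ (Real.exp t)^(m-1) / 2^(m-1) := by
                apply div_le_div_of_nonneg_right h3 (by positivity) |>.trans_eq rfl
            _ = (Real.exp t / 2)^(m-1) := h4.symm
            _ ≤ Real.cosh t ^ (m-1) := h2
  -- strict monotonicity of S, strict antitonicity of R on [0, ∞)
  have hSmono : StrictMonoOn (Sfun n H d) (Ici 0) := by
    apply strictMonoOn_of_deriv_pos (convex_Ici 0) hScont.continuousOn
    intro x hx
    rw [interior_Ici] at hx
    rw [(hS x).deriv]
    have h1 : 0 ≤ Real.sinh x := Real.sinh_nonneg_iff.mpr hx.le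
    nlinarith [mul_nonneg (mul_nonneg hm0.le (pow_pos (hcoshpos x) (m-1)).le) h1, hpow1 x]
  have hRanti : StrictAntiOn (Rfun n H d) (Ici 0) := by
    apply strictAntiOn_of_deriv_neg (convex_Ici 0) hRcont.continuousOn
    intro x hx
    rw [interior_Ici] at hx
    rw [(hR x).deriv]
    have hpow : Real.cosh x ^ m = Real.cosh x ^ (m-1) * Real.cosh x := by
      rw [← pow_succ]; congr 1; omega
    rw [hpow]
    have key : (m:ℝ) * Real.cosh x ^ (m-1) * (Real.cosh x - Real.sinh x)
        = (m:ℝ) * Real.cosh x ^(m-1) * Real.exp (-x) := by rw [Real.cosh_sub_sinh]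
    nlinarith [key, mul_pos (mul_pos hm0 (pow_pos (hcoshpos x) (m-1))) (Real.exp_pos (-x))]
  -- quantitative monotone auxiliaries
  have hf1mono : MonotoneOn (fun t => Sfun n H d t - 2*t) (Ici 0) := by
    have hder : ∀ x : ℝ, HasDerivAt (fun t => Sfun n H d t - 2*t)
        ((m:ℝ) * Real.cosh x ^ (m-1) * Real.sinh x + (m:ℝ) * Real.cosh x ^ m - 2) x := by
      intro x
      have h := (hS x).sub ((hasDerivAt_id x).const_mul (2:ℝ)); simp only [id, mul_one] at h; exact h
    apply monotoneOn_of_deriv_nonneg (convex_Ici 0)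
      (Continuous.continuousOn (by fun_prop))
      (fun x _ => ((hder x).differentiableAt).differentiableWithinAt)
    intro x hx
    rw [interior_Ici] at hx
    rw [(hder x).deriv]
    have h1 : 0 ≤ Real.sinh x := Real.sinh_nonneg_iff.mpr hx.le
    nlinarith [mul_nonneg (mul_nonneg hm0.le (pow_pos (hcoshpos x) (m-1)).le) h1, hpow1 x]
  have hf2anti : AntitoneOn (fun t => Rfun n H d t + k2*t) (Ici 0) := by
    have hder : ∀ x : ℝ, HasDerivAt (fun t => Rfun n H d t + k2*t)
        ((m:ℝ) * Real.cosh x ^ (m-1) * Real.sinh x - (m:ℝ) * Real.cosh x ^ m + k2) x := by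
      intro x
      have h := (hR x).add ((hasDerivAt_id x).const_mul k2); simp only [id, mul_one] at h; exact h
    apply antitoneOn_of_deriv_nonpos (convex_Ici 0)
      (Continuous.continuousOn (by fun_prop))
      (fun x _ => ((hder x).differentiableAt).differentiableWithinAt)
    intro x hx
    rw [interior_Ici] at hx
    rw [(hder x).deriv]
    have hpow : Real.cosh x ^ m = Real.cosh x ^ (m-1) * Real.cosh x := by
      rw [← pow_succ]; congr 1; omega
    rw [hpow]
    have key : (m:ℝ) * Real.cosh x ^ (m-1) * (Real.cosh x - Real.sinh x)
        = (m:ℝ) * Real.cosh x ^(m-1) * Real.exp (-x) := by rw [Real.cosh_sub_sinh]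
    have hl := mul_le_mul_of_nonneg_left (hlow x hx.le) hm0.le
    rw [hk2def]
    have e1 : (m:ℝ) * Real.cosh x ^ (m-1) * Real.sinh x
        - (m:ℝ) * (Real.cosh x ^ (m-1) * Real.cosh x)
        = -((m:ℝ) * (Real.cosh x ^ (m-1) * Real.exp (-x))) := by
      rw [← Real.cosh_sub_sinh x]; ring
    have e2 : (m:ℝ) / 2^(m-1) = (m:ℝ) * (1 / 2^(m-1)) := by ring
    rw [e2]
    linarith [hl, e1]
  -- values at 0
  have hJ0 : Jfun m 0 = 0 := by simp [Jfun]
  have hS0 : Sfun n H d 0 = 1 + d := by simp [Sfun, hJ0, Real.cosh_zero, Jfun]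
  have hR0 : Rfun n H d 0 = 1 - d := by simp [Rfun, hJ0, Real.cosh_zero, Jfun]
  -- existence of α
  have hb1pos : (0:ℝ) < -d := by linarith
  have hSb1 : 0 < Sfun n H d (-d) := by
    have := hf1mono (self_mem_Ici) (mem_Ici.mpr hb1pos.le) hb1pos.le
    simp only [hS0] at this
    linarith
  obtain ⟨α, hαmem, hαS⟩ : ∃ α ∈ Icc (0:ℝ) (-d), Sfun n H d α = 0 := by
    have h := intermediate_value_Icc hb1pos.le hScont.continuousOn
    have h0 : (0:ℝ) ∈ Icc (Sfun n H d 0) (Sfun n H d (-d)) := by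
      constructor <;> [rw [hS0]; skip] <;> linarith
    obtain ⟨α, hα1, hα2⟩ := h h0
    exact ⟨α, hα1, hα2⟩
  have hαpos : 0 < α := by
    rcases hαmem.1.lt_or_eq with h | h
    · exact h
    · exfalso; rw [← h] at hαS; rw [hS0] at hαS; linarith
  -- existence of c
  set b2 : ℝ := (2 - d)/k2 with hb2def
  have hb2pos : 0 < b2 := div_pos (by linarith) hk2
  have hRb2 : Rfun n H d b2 < 0 := by
    have := hf2anti (self_mem_Ici) (mem_Ici.mpr hb2pos.le) hb2pos.le
    simp only [hR0] at this
    have hmul : k2 * b2 = 2 - d := by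
      rw [hb2def]; field_simp
    nlinarith
  obtain ⟨c, hcmem, hcR⟩ : ∃ c ∈ Icc (0:ℝ) b2, Rfun n H d c = 0 := by
    have h := intermediate_value_Icc' hb2pos.le hRcont.continuousOn
    have h0 : (0:ℝ) ∈ Icc (Rfun n H d b2) (Rfun n H d 0) := by
      constructor <;> [linarith; rw [hR0]] <;> linarith
    obtain ⟨c, hc1, hc2⟩ := h h0
    exact ⟨c, hc1, hc2⟩
  have hcpos : 0 < c := by
    rcases hcmem.1.lt_or_eq with h | h
    · exact h
    · exfalso; rw [← h] at hcR; rw [hR0] at hcR; linarith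
  -- R α > 0
  have hRS : ∀ t, Rfun n H d t + Sfun n H d t = 2 * Real.cosh t ^ m := by
    intro t; simp [Rfun, Sfun]; ring
  have hRα : 0 < Rfun n H d α := by
    have := hRS α
    rw [hαS] at this
    nlinarith [hpow1 α]
  have hαc : α < c := by
    rcases lt_trichotomy α c with h | h | h
    · exact h
    · exfalso; rw [h, hcR] at hRα; exact lt_irrefl 0 hRα
    · exfalso
      have := hRanti (mem_Ici.mpr hcpos.le) (mem_Ici.mpr hαpos.le) h
      rw [hcR] at this
      linarith
  -- positivity on (α, c)
  have hposRS : ∀ t, α < t → t < c → 0 < Rfun n H d t ∧ 0 < Sfun n H d t := by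
    intro t h1 h2
    constructor
    · have := hRanti (mem_Ici.mpr (hαpos.trans h1).le) (mem_Ici.mpr hcpos.le) h2
      rw [hcR] at this; exact this
    · have := hSmono (mem_Ici.mpr hαpos.le) (mem_Ici.mpr (hαpos.trans h1).le) h1
      rw [hαS] at this; exact this
  refine ⟨α, c, hαpos, hαS, ?_, hcpos, hcR, ?_, hαc, hposRS, ?_⟩
  · intro x hx hx0
    exact hSmono.injOn (mem_Ici.mpr hx.le) (mem_Ici.mpr hαpos.le) (by rw [hx0, hαS])
  · intro x hx hx0
    exact hRanti.injOn (mem_Ici.mpr hx.le) (mem_Ici.mpr hcpos.le) (by rw [hx0, hcR])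
  -- integrability
  have hSlb : ∀ t ∈ Icc α c, 2*(t - α) ≤ Sfun n H d t := by
    intro t ht
    have h := hf1mono (mem_Ici.mpr hαpos.le) (mem_Ici.mpr (hαpos.le.trans ht.1)) ht.1
    simp only [hαS] at h
    linarith [h]
  have hRlb : ∀ t ∈ Icc α c, k2*(c - t) ≤ Rfun n H d t := by
    intro t ht
    have h := hf2anti (mem_Ici.mpr (hαpos.le.trans ht.1)) (mem_Ici.mpr hcpos.le) ht.2
    simp only [hcR] at h
    nlinarith [h]
  have hnum_cont : Continuous (fun t => (n:ℝ)*H*Jfun (n-1) t + d) :=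
    (continuous_const.mul hJcont).add continuous_const
  obtain ⟨M, hM⟩ := (isCompact_Icc : IsCompact (Icc α c)).exists_bound_of_continuousOn
    hnum_cont.continuousOn
  set A : ℝ := k2 * (c - α) with hAdef
  have hA : 0 < A := mul_pos hk2 (by linarith)
  have hMnonneg : 0 ≤ M := le_trans (norm_nonneg _) (hM α ⟨le_refl _, hαc.le⟩)
  set C : ℝ := M / Real.sqrt A with hCdef
  have hCnn : 0 ≤ C := div_nonneg hMnonneg (Real.sqrt_nonneg A)
  have hprod : ∀ t ∈ Icc α c, k2*(c - t) * (2*(t - α)) ≤ Rfun n H d t * Sfun n H d t := by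
    intro t ht
    exact mul_le_mul (hRlb t ht) (hSlb t ht) (by linarith [ht.1])
      (le_trans (mul_nonneg hk2.le (sub_nonneg.mpr ht.2)) (hRlb t ht))
  have hbound : ∀ t ∈ Ioo α c, ∀ s : ℝ, 0 < s →
      A * s ≤ Rfun n H d t * Sfun n H d t → ‖Tfun n H d t‖ ≤ C * (s ^ (-(1/2):ℝ)) := by
    intro t ht s hs hle
    obtain ⟨hRt, hSt⟩ := hposRS t ht.1 ht.2
    have hsq : Real.sqrt A * Real.sqrt s ≤ Real.sqrt (Rfun n H d t * Sfun n H d t) := by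
      rw [← Real.sqrt_mul hA.le]; exact Real.sqrt_le_sqrt hle
    have hsApos : 0 < Real.sqrt A := Real.sqrt_pos.mpr hA
    have hsspos : 0 < Real.sqrt s := Real.sqrt_pos.mpr hs
    have hnorm : ‖Tfun n H d t‖
        = |(n:ℝ)*H*Jfun (n-1) t + d| / Real.sqrt (Rfun n H d t * Sfun n H d t) := by
      simp only [Tfun, Real.norm_eq_abs, abs_div, abs_of_nonneg (Real.sqrt_nonneg _)]
    rw [hnorm]
    have h1 : |(n:ℝ)*H*Jfun (n-1) t + d| ≤ M := by
      have := hM t ⟨ht.1.le, ht.2.le⟩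
      simpa [Real.norm_eq_abs] using this
    calc |(n:ℝ)*H*Jfun (n-1) t + d| / Real.sqrt (Rfun n H d t * Sfun n H d t)
        ≤ M / (Real.sqrt A * Real.sqrt s) :=
          div_le_div₀ hMnonneg h1 (mul_pos hsApos hsspos) hsq
      _ = C * (s ^ (-(1/2):ℝ)) := by
          rw [Real.rpow_neg hs.le, ← Real.sqrt_eq_rpow, hCdef]
          field_simp
  set mid : ℝ := (α + c)/2 with hmiddef
  have hmid1 : α < mid := by rw [hmiddef]; linarith
  have hmid2 : mid < c := by rw [hmiddef]; linarith
  have hTcont : ContinuousOn (Tfun n H d) (Ioo α c) := by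
    have : ContinuousOn (fun t => ((n:ℝ)*H*Jfun (n-1) t + d)
        / Real.sqrt (Rfun n H d t * Sfun n H d t)) (Ioo α c) := by
      apply ContinuousOn.div hnum_cont.continuousOn
        (Real.continuous_sqrt.comp (hRcont.mul hScont)).continuousOn
      intro t ht
      exact ne_of_gt (Real.sqrt_pos.mpr (mul_pos (hposRS t ht.1 ht.2).1 (hposRS t ht.1 ht.2).2))
    exact this
  -- first half
  have h1 : IntegrableOn (Tfun n H d) (Ioo α mid) := by
    have base : IntervalIntegrable (fun x : ℝ => x ^ (-(1/2):ℝ)) volume 0 (mid - α) :=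
      intervalIntegrable_rpow' (by norm_num)
    have shift := (base.comp_sub_right α).const_mul C
    have shift' : IntervalIntegrable (fun x : ℝ => C * (x - α) ^ (-(1/2):ℝ)) volume α mid := by
      convert shift using 2 <;> ring
    have g1int : IntegrableOn (fun x : ℝ => C * (x - α) ^ (-(1/2):ℝ)) (Ioo α mid) volume :=
      ((intervalIntegrable_iff_integrableOn_Ioc_of_le hmid1.le).mp shift').mono_set
        Ioo_subset_Ioc_self
    apply g1int.integrable.mono'
      ((hTcont.mono (Ioo_subset_Ioo_right hmid2.le)).aestronglyMeasurable measurableSet_Ioo)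
    rw [ae_restrict_iff' measurableSet_Ioo]
    filter_upwards with t ht
    have htc : t ∈ Ioo α c := ⟨ht.1, ht.2.trans hmid2⟩
    apply hbound t htc (t - α) (by linarith [ht.1])
    have hA1 : A * (t - α) ≤ k2*(c - t) * (2*(t - α)) := by
      rw [hAdef]
      nlinarith [mul_nonneg hk2.le (sub_nonneg.mpr ht.1.le), ht.2, hmid2]
    exact hA1.trans (hprod t ⟨htc.1.le, htc.2.le⟩)
  -- second half
  have h2 : IntegrableOn (Tfun n H d) (Ioo mid c) := by
    have base : IntervalIntegrable (fun x : ℝ => x ^ (-(1/2):ℝ)) volume 0 (c - mid) :=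
      intervalIntegrable_rpow' (by norm_num)
    have shift := ((base.comp_sub_left c).const_mul C).symm
    have shift' : IntervalIntegrable (fun x : ℝ => C * (c - x) ^ (-(1/2):ℝ)) volume mid c := by
      convert shift using 2 <;> ring
    have g2int : IntegrableOn (fun x : ℝ => C * (c - x) ^ (-(1/2):ℝ)) (Ioo mid c) volume :=
      ((intervalIntegrable_iff_integrableOn_Ioc_of_le hmid2.le).mp shift').mono_set
        Ioo_subset_Ioc_self
    apply g2int.integrable.mono'
      ((hTcont.mono (Ioo_subset_Ioo_left hmid1.le)).aestronglyMeasurable measurableSet_Ioo)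
    rw [ae_restrict_iff' measurableSet_Ioo]
    filter_upwards with t ht
    have htc : t ∈ Ioo α c := ⟨hmid1.trans ht.1, ht.2⟩
    apply hbound t htc (c - t) (by linarith [ht.2])
    have hA1 : A * (c - t) ≤ k2*(c - t) * (2*(t - α)) := by
      rw [hAdef]
      nlinarith [mul_nonneg hk2.le (sub_nonneg.mpr ht.2.le), ht.1, hmid1]
    exact hA1.trans (hprod t ⟨htc.1.le, htc.2.le⟩)
  have hIco : IntegrableOn (Tfun n H d) (Ico mid c) :=
    (integrableOn_Ico_iff_integrableOn_Ioo).mpr h2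
  rw [← Set.Ioo_union_Ico_eq_Ioo hmid1 hmid2.le]
  exact h1.union hIco
end
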